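/- arXiv:1502.05185 — 6 statements merged into one kernel-verified Lean document; each statement's English description precedes it below -/
import Mathlib

section
/- Let E ⊆ ℝ^d be compact and H : E × ℝ^d → ℝ continuous, convex in p, with H(x,0) = 0 for all x. Define the Lagrangian L(x,v) = sup_{p∈ℝ^d} (⟨p,v⟩ − H(x,p)). Then for every c ≥ 0 the sublevel set {(x,v) ∈ E × ℝ^d : L(x,v) ≤ c} is compact. -/
open scoped BigOperators

/-- For `E ⊆ ℝ^d` compact nonempty and `H : E × ℝ^d → ℝ` jointly continuous, convex in
the second variable with `H(x,0) = 0`, the sublevel sets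
`{(x,v) : x ∈ E, L(x,v) ≤ c}` of the Lagrangian
`L(x,v) = sup_p (⟨p,v⟩ − H(x,p))` are compact. -/
theorem stmt_3 {d : ℕ} (E : Set (Fin d → ℝ)) (hEc : IsCompact E) (hEne : E.Nonempty)
    (H : (Fin d → ℝ) → (Fin d → ℝ) → ℝ)
    (hHcont : ContinuousOn (fun q : (Fin d → ℝ) × (Fin d → ℝ) => H q.1 q.2)
      (E ×ˢ Set.univ))
    (hHconv : ∀ x ∈ E, ConvexOn ℝ Set.univ (H x))
    (hH0 : ∀ x ∈ E, H x 0 = 0)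
    (L : (Fin d → ℝ) → (Fin d → ℝ) → EReal)
    (hL : ∀ x v, L x v = ⨆ p : Fin d → ℝ, ((∑ i, p i * v i - H x p : ℝ) : EReal)) :
    ∀ c : ℝ, 0 ≤ c →
      IsCompact {q : (Fin d → ℝ) × (Fin d → ℝ) | q.1 ∈ E ∧ L q.1 q.2 ≤ (c : EReal)} := by
  intro c hc
  set S := {q : (Fin d → ℝ) × (Fin d → ℝ) | q.1 ∈ E ∧ L q.1 q.2 ≤ (c : EReal)} with hS
  -- Step 0: closedness of E ×ˢ univ
  have hEclosed : IsClosed (E ×ˢ (Set.univ : Set (Fin d → ℝ))) :=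
    hEc.isClosed.prod isClosed_univ
  -- Step 1: ε such that H x p < 1 for x ∈ E, ‖p‖ < ε
  obtain ⟨ε, hε0, hε1, hεH⟩ :
      ∃ ε : ℝ, 0 < ε ∧ ε ≤ 1 ∧ ∀ x ∈ E, ∀ p : Fin d → ℝ, ‖p‖ < ε → H x p < 1 := by
    set K := E ×ˢ Metric.closedBall (0 : Fin d → ℝ) 1 with hK
    have hKc : IsCompact K := hEc.prod (isCompact_closedBall 0 1)
    have hKsub : K ⊆ E ×ˢ Set.univ := Set.prod_mono subset_rfl (Set.subset_univ _)
    have hcontK : ContinuousOn (fun q : (Fin d → ℝ) × (Fin d → ℝ) => H q.1 q.2) K :=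
      hHcont.mono hKsub
    set A := K ∩ {q : (Fin d → ℝ) × (Fin d → ℝ) | 1 ≤ H q.1 q.2} with hA
    have hAclosed : IsClosed A := by
      have := hcontK.preimage_isClosed_of_isClosed (hKc.isClosed) (isClosed_Ici (a := (1:ℝ)))
      exact this
    have hAc : IsCompact A := hKc.of_isClosed_subset hAclosed Set.inter_subset_left
    rcases A.eq_empty_or_nonempty with hAe | hAne
    · refine ⟨1, one_pos, le_rfl, fun x hx p hp => ?_⟩
      by_contra h
      push_neg at h
      have : (x, p) ∈ A := ⟨⟨hx, by
        simpa [Metric.mem_closedBall, dist_eq_norm] using hp.le⟩, h⟩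
      simp [hAe] at this
    · obtain ⟨q₀, hq₀A, hq₀min⟩ := hAc.exists_isMinOn hAne
        (continuous_norm.comp continuous_snd).continuousOn
      refine ⟨‖q₀.2‖, ?_, ?_, ?_⟩
      · rcases eq_or_lt_of_le (norm_nonneg q₀.2) with h0 | h0
        · exfalso
          have h2 : q₀.2 = 0 := by simpa using h0.symm
          have h1 : (1:ℝ) ≤ H q₀.1 q₀.2 := hq₀A.2
          rw [h2, hH0 q₀.1 hq₀A.1.1] at h1
          linarith
        · exact h0
      · simpa [Metric.mem_closedBall, dist_eq_norm] using hq₀A.1.2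
      · intro x hx p hp
        by_contra h
        push_neg at h
        have hpA : (x, p) ∈ A := ⟨⟨hx, by
          simpa [Metric.mem_closedBall, dist_eq_norm] using
            hp.le.trans (by
              simpa [Metric.mem_closedBall, dist_eq_norm] using hq₀A.1.2)⟩, h⟩
        have := hq₀min hpA
        simp only [Function.comp] at this
        exact absurd this (not_le.mpr hp)
  -- Step 2: sublevel condition implies pointwise inequality
  have key : ∀ q ∈ S, ∀ p : Fin d → ℝ, ∑ i, p i * q.2 i - H q.1 p ≤ c := by
    intro q hq p
    have h1 : ((∑ i, p i * q.2 i - H q.1 p : ℝ) : EReal) ≤ (c : EReal) := by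
      refine le_trans ?_ hq.2
      rw [hL]
      exact le_iSup (fun p => ((∑ i, p i * q.2 i - H q.1 p : ℝ) : EReal)) p
    exact_mod_cast h1
  -- Step 3: boundedness
  set R : ℝ := 2 * (c + 1) / ε with hR
  have hR0 : 0 ≤ R := by positivity
  have hbound : S ⊆ E ×ˢ Metric.closedBall (0 : Fin d → ℝ) R := by
    intro q hq
    refine ⟨hq.1, ?_⟩
    rw [Metric.mem_closedBall, dist_zero_right]
    rw [pi_norm_le_iff_of_nonneg hR0]
    intro i
    set a : ℝ := if 0 ≤ q.2 i then ε / 2 else -(ε / 2) with ha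
    set p : Fin d → ℝ := Pi.single i a with hp
    have hpa : ‖p‖ < ε := by
      rw [hp, Pi.norm_single]
      have : ‖a‖ = ε / 2 := by
        rw [ha]; split <;> simp [abs_of_pos, hε0, abs_of_nonneg hε0.le, le_of_lt hε0]
      rw [this]; linarith
    have hHp : H q.1 p < 1 := hεH q.1 hq.1 p hpa
    have hsum : ∑ j, p j * q.2 j = a * q.2 i := by
      rw [hp]
      rw [Finset.sum_eq_single i]
      · simp
      · intro b _ hb; simp [Pi.single_apply, hb]
      · simp
    have h2 := key q hq p
    rw [hsum] at h2
    have h3 : a * q.2 i = ε / 2 * |q.2 i| := by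
      rw [ha]
      rcases le_or_gt 0 (q.2 i) with h | h
      · rw [if_pos h, abs_of_nonneg h]
      · rw [if_neg (not_le.mpr h), abs_of_neg h]; ring
    rw [h3] at h2
    have h4 : ε / 2 * |q.2 i| ≤ c + 1 := by linarith
    have : |q.2 i| ≤ R := by
      rw [hR, le_div_iff₀ hε0]
      nlinarith
    simpa [Real.norm_eq_abs] using this
  -- Step 4: closedness of S
  have hSclosed : IsClosed S := by
    have hSeq : S = ⋂ p : Fin d → ℝ,
        ((E ×ˢ Set.univ) ∩
          {q : (Fin d → ℝ) × (Fin d → ℝ) | ∑ i, p i * q.2 i - H q.1 p ≤ c}) := by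
      ext q
      simp only [Set.mem_iInter, Set.mem_inter_iff, Set.mem_setOf_eq, hS,
        Set.mem_prod, Set.mem_univ, and_true]
      constructor
      · intro hq p
        exact ⟨hq.1, key q hq p⟩
      · intro h
        refine ⟨(h 0).1, ?_⟩
        rw [hL]
        refine iSup_le fun p => ?_
        exact_mod_cast (h p).2
    rw [hSeq]
    refine isClosed_iInter fun p => ?_
    have hcont : ContinuousOn
        (fun q : (Fin d → ℝ) × (Fin d → ℝ) => ∑ i, p i * q.2 i - H q.1 p)
        (E ×ˢ Set.univ) := by
      refine ContinuousOn.sub ?_ ?_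
      · exact (continuous_finset_sum _ fun i _ =>
          (continuous_const.mul ((continuous_apply i).comp continuous_snd))).continuousOn
      · exact hHcont.comp (continuous_fst.prodMk continuous_const).continuousOn
          (fun q hq => ⟨hq.1, Set.mem_univ _⟩)
    exact hcont.preimage_isClosed_of_isClosed hEclosed (isClosed_Iic (a := c))
  -- conclude
  exact (hEc.prod (isCompact_closedBall 0 R)).of_isClosed_subset hSclosed hbound
end

section
/- Let E ⊆ ℝ^d be compact, B : E × ℝ^d → ℝ continuous, λ > 0, h ∈ C(E). Let v : E → ℝ be a bounded lower semicontinuous viscosity supersolution of f(x) − λ B(x, ∇f(x)) − h(x) = 0. Let Ψ be a good distance function and suppose (x_α, y_α) maximizes (x,y) ↦ u(x) − v(y) − αΨ(x,y) over E² (with u bounded and upper semicontinuous). Then sup_α B(y_α, α (∇_x Ψ)(x_α, y_α)) ≤ (‖v‖_∞ + ‖h‖_∞)/λ < ∞. -/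
open scoped BigOperators

/-- Control on the Hamiltonian along a supersolution (Lemma 9.3 in Feng–Kurtz):
if `v` is a bounded lsc viscosity supersolution of `f − λB(·,∇f) − h = 0` on a compact
`E ⊆ ℝ^d`, `Ψ` a good distance function with first-component gradient `G`, and
`(x α, y α)` maximises `u(x) − v(y) − αΨ(x,y)` over `E²`, then
`B(y α, α ∇_xΨ(x α, y α)) ≤ (‖v‖_∞ + ‖h‖_∞)/λ` for all `α > 0`. -/
theorem stmt_8 {d : ℕ} (E : Set (Fin d → ℝ)) (hEc : IsCompact E) (hEne : E.Nonempty)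
    (B : (Fin d → ℝ) → (Fin d → ℝ) → ℝ)
    (hBcont : Continuous fun q : (Fin d → ℝ) × (Fin d → ℝ) => B q.1 q.2)
    (lam : ℝ) (hlam : 0 < lam) (h : (Fin d → ℝ) → ℝ) (hh : ContinuousOn h E)
    (u v : (Fin d → ℝ) → ℝ)
    (hu_usc : UpperSemicontinuousOn u E) (hv_lsc : LowerSemicontinuousOn v E)
    (Cu Cv Ch : ℝ)
    (hub : ∀ x ∈ E, |u x| ≤ Cu) (hvb : ∀ x ∈ E, |v x| ≤ Cv) (hhb : ∀ x ∈ E, |h x| ≤ Ch)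
    -- v is a viscosity supersolution: for every C¹ test function f and interior
    -- minimum point x of v − f over E, we have v(x) − λ B(x, ∇f(x)) − h(x) ≥ 0.
    (hv_super : ∀ f : (Fin d → ℝ) → ℝ, ContDiff ℝ 1 f → ∀ x ∈ E,
      IsMinOn (fun y => v y - f y) E x →
      0 ≤ v x - lam * B x (fun i => fderiv ℝ f x (Pi.single i 1)) - h x)
    -- Ψ is a good distance function with gradient G in the first component:
    (Ψ : (Fin d → ℝ) → (Fin d → ℝ) → ℝ) (G : (Fin d → ℝ) → (Fin d → ℝ) → (Fin d → ℝ))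
    (hΨpos : ∀ x y, 0 ≤ Ψ x y) (hΨ0 : ∀ x y, Ψ x y = 0 → x = y)
    (hΨC1x : ∀ y, ContDiff ℝ 1 (fun x => Ψ x y))
    (hΨC1y : ∀ x, ContDiff ℝ 1 (fun y => Ψ x y))
    (hGx : ∀ x y i, fderiv ℝ (fun x' => Ψ x' y) x (Pi.single i 1) = G x y i)
    (hGy : ∀ x y i, fderiv ℝ (fun y' => Ψ x y') y (Pi.single i 1) = -(G x y i))
    (x y : ℝ → (Fin d → ℝ))
    (hmem : ∀ α > (0:ℝ), x α ∈ E ∧ y α ∈ E)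
    (hmax : ∀ α > (0:ℝ), ∀ x' ∈ E, ∀ y' ∈ E,
      u x' - v y' - α * Ψ x' y' ≤ u (x α) - v (y α) - α * Ψ (x α) (y α)) :
    ∀ α > (0:ℝ), B (y α) (fun i => α * G (x α) (y α) i) ≤ (Cv + Ch) / lam := by

  intro α hα
  obtain ⟨hxE, hyE⟩ := hmem α hα
  set f : (Fin d → ℝ) → ℝ := fun y' => u (x α) - α * Ψ (x α) y' with hf
  have hfC1 : ContDiff ℝ 1 f :=
    contDiff_const.sub (contDiff_const.mul (hΨC1y (x α)))
  have hmin : IsMinOn (fun y' => v y' - f y') E (y α) := by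
    intro y' hy'
    have := hmax α hα (x α) hxE y' hy'
    simp only [hf, Set.mem_setOf_eq]
    linarith
  have hdiff : DifferentiableAt ℝ (fun y' => Ψ (x α) y') (y α) :=
    ((hΨC1y (x α)).differentiable one_ne_zero).differentiableAt
  have hder : ∀ i, fderiv ℝ f (y α) (Pi.single i 1) = α * G (x α) (y α) i := by
    intro i
    have h1 : fderiv ℝ f (y α)
        = fderiv ℝ (fun _ => u (x α)) (y α)
          - fderiv ℝ (fun y' => α * Ψ (x α) y') (y α) :=
      fderiv_sub (differentiableAt_const _) (hdiff.const_mul α)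
    have h2 : fderiv ℝ (fun y' => α * Ψ (x α) y') (y α)
        = α • fderiv ℝ (fun y' => Ψ (x α) y') (y α) := fderiv_const_mul hdiff α
    rw [h1, h2]
    simp [hGy (x α) (y α) i]
  have key := hv_super f hfC1 (y α) hyE hmin
  have heq : (fun i => fderiv ℝ f (y α) (Pi.single i 1))
      = fun i => α * G (x α) (y α) i := funext hder
  rw [heq] at key
  have hv1 := abs_le.mp (hvb (y α) hyE)
  have hh1 := abs_le.mp (hhb (y α) hyE)
  rw [le_div_iff₀ hlam]
  nlinarith [key]
end

section
/- Let H(x,p) = v₊(x)(e^{2p} − 1) + v₋(x)(e^{−2p} − 1) on E = [-1,1], where v₊, v₋ : E → [0,∞) are continuous, v₊(x) > 0 for x ≠ 1, v₊(1) = 0 with a local decomposition v₊ = v₊,† · v₊,‡ near 1 (v₊,† decreasing, v₊,‡ continuous and nonzero at 1), and symmetrically for v₋ at −1. Then for every λ > 0 and h ∈ C(E), the equation f(x) − λH(x, f'(x)) − h(x) = 0 satisfies the comparison principle: every bounded usc viscosity subsolution u and bounded lsc viscosity supersolution v satisfy u ≤ v on E. -/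
open Real


private lemma ev_abs_lt {f : ℕ → ℝ} {L ε : ℝ} (hf : Filter.Tendsto f Filter.atTop (nhds L))
    (hε : 0 < ε) : ∀ᶠ k in Filter.atTop, |f k - L| < ε := by
  obtain ⟨N, hN⟩ := Metric.tendsto_atTop.mp hf ε hε
  filter_upwards [Filter.eventually_ge_atTop N] with k hk
  simpa [Real.dist_eq] using hN k hk

private lemma usc_exists_max {γ : Type*} [TopologicalSpace γ] {s : Set γ} (hs : IsCompact s)
    (hne : s.Nonempty) {f : γ → ℝ} (hf : UpperSemicontinuousOn f s) :
    ∃ a ∈ s, ∀ x ∈ s, f x ≤ f a := by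
  by_contra hcon
  push_neg at hcon
  choose! g hgs hgf using hcon
  have hV : ∀ a ∈ s, ∃ V : Set γ, IsOpen V ∧ a ∈ V ∧ ∀ y ∈ V ∩ s, f y < f (g a) := by
    intro a ha
    have h2 := hf a ha (f (g a)) (hgf a ha)
    rcases mem_nhdsWithin.mp h2 with ⟨V, hVo, haV, hVsub⟩
    exact ⟨V, hVo, haV, fun y hy => hVsub hy⟩
  choose! V hVo hVa hVlt using hV
  obtain ⟨t, hts, hcover⟩ := hs.elim_nhds_subcover V (fun a ha => (hVo a ha).mem_nhds (hVa a ha))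
  obtain ⟨a0, ha0⟩ := hne
  have htne : t.Nonempty := by
    rcases Set.mem_iUnion₂.mp (hcover ha0) with ⟨b, hb, _⟩
    exact ⟨b, hb⟩
  obtain ⟨b, hbt, hbmax⟩ := t.exists_max_image (fun a => f (g a)) htne
  have hgb : g b ∈ s := hgs b (hts b hbt)
  rcases Set.mem_iUnion₂.mp (hcover hgb) with ⟨a, hat, hga⟩
  have h1 : f (g b) < f (g a) := hVlt a (hts a hat) (g b) ⟨hga, hgb⟩
  have h2 : f (g a) ≤ f (g b) := hbmax a hat
  linarith

set_option maxHeartbeats 1000000 in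
private lemma key_term (v : ℝ → ℝ)
    (hvc : ContinuousOn v (Set.Icc (-1) 1))
    (hv0 : ∀ x ∈ Set.Icc (-1:ℝ) 1, 0 ≤ v x)
    (hv : (∀ x ∈ Set.Icc (-1:ℝ) 1, v x = 0) ∨
      ((∀ x ∈ Set.Icc (-1:ℝ) 1, x ≠ 1 → 0 < v x) ∧ v 1 = 0 ∧
        ∃ U ∈ nhdsWithin (1:ℝ) (Set.Icc (-1:ℝ) 1), ∃ d dd : ℝ → ℝ,
          (∀ x ∈ U, v x = d x * dd x) ∧ AntitoneOn d U ∧ ContinuousOn dd U ∧ dd 1 ≠ 0))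
    (X Y : ℕ → ℝ) (hX : ∀ k, X k ∈ Set.Icc (-1:ℝ) 1) (hY : ∀ k, Y k ∈ Set.Icc (-1:ℝ) 1)
    (z : ℝ) (hz : z ∈ Set.Icc (-1:ℝ) 1)
    (hXz : Filter.Tendsto X Filter.atTop (nhds z))
    (hYz : Filter.Tendsto Y Filter.atTop (nhds z))
    (G : ℕ → ℝ) (C ε : ℝ) (hε : 0 < ε) :
    ∀ᶠ k in Filter.atTop, (Y k ≤ X k ∧ 0 ≤ G k ∧ v (Y k) * G k ≤ C) →
      (v (X k) - v (Y k)) * G k ≤ ε := by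
  rcases hv with h0 | ⟨hpos, hv1, U, hU, d, dd, hdec, hanti, hddc, hdd1⟩
  · filter_upwards with k _
    rw [h0 _ (hX k), h0 _ (hY k)]
    simpa using hε.le
  by_cases hz1 : z = 1
  · subst hz1
    obtain ⟨V, hVo, h1V, hVU⟩ := mem_nhdsWithin.mp hU
    have h1I : (1:ℝ) ∈ Set.Icc (-1:ℝ) 1 := by norm_num
    have h1U : (1:ℝ) ∈ U := hVU ⟨h1V, h1I⟩
    have hd1 : d 1 = 0 := by
      have h2 := hdec 1 h1U
      rw [hv1] at h2
      rcases mul_eq_zero.mp h2.symm with h3 | h3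
      · exact h3
      · exact absurd h3 hdd1
    have hdd1pos : 0 < dd 1 := by
      rcases lt_or_gt_of_ne hdd1 with hneg | hposs
      · exfalso
        -- find a point near 1 in U ∩ Icc, ≠ 1, with dd < 0 : contradiction with v > 0
        have hev : ∀ᶠ t in nhdsWithin 1 U, dd t < 0 :=
          (hddc 1 h1U).eventually (eventually_lt_nhds hneg)
        obtain ⟨W, hWo, h1W, hWsub⟩ := mem_nhdsWithin.mp hev
        obtain ⟨δ1, hδ1, hball1⟩ := Metric.isOpen_iff.mp hVo 1 h1V
        obtain ⟨δ2, hδ2, hball2⟩ := Metric.isOpen_iff.mp hWo 1 h1W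
        set δ := min (min δ1 δ2) 1 with hδdef
        have hδpos : 0 < δ := by positivity
        set t := 1 - δ/2 with htdef
        have htI : t ∈ Set.Icc (-1:ℝ) 1 := by
          constructor
          · have : δ ≤ 1 := min_le_right _ _
            simp only [htdef]; linarith
          · simp only [htdef]; linarith
        have htd : |t - 1| < min δ1 δ2 := by
          have h3 : δ ≤ min δ1 δ2 := min_le_left _ _
          have h4 : 0 < min δ1 δ2 := lt_min hδ1 hδ2
          rw [abs_lt]; constructor <;> simp only [htdef] <;> linarith
        have htV : t ∈ V := hball1 (by
          simp only [Metric.mem_ball, Real.dist_eq]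
          exact lt_of_lt_of_le htd (min_le_left _ _))
        have htW : t ∈ W := hball2 (by
          simp only [Metric.mem_ball, Real.dist_eq]
          exact lt_of_lt_of_le htd (min_le_right _ _))
        have htU : t ∈ U := hVU ⟨htV, htI⟩
        have htdd : dd t < 0 := hWsub ⟨htW, htU⟩
        have htne : t ≠ 1 := by simp only [htdef]; intro hcc; linarith [(sub_eq_self.mp hcc)]
        have hvt : 0 < v t := hpos t htI htne
        have hdt : 0 ≤ d t := by
          have := hanti htU h1U htI.2
          rw [hd1] at this; exact this
        have := hdec t htU
        nlinarith
      · exact hposs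
    set C' := max C 0 with hC'def
    have hC'0 : 0 ≤ C' := le_max_right _ _
    set δ0 := ε * dd 1 / (2 * (C' + 1)) with hδ0def
    have hδ0 : 0 < δ0 := by positivity
    -- eventual conditions
    have e1 : ∀ᶠ k in Filter.atTop, X k ∈ V := hXz (hVo.mem_nhds h1V)
    have e2 : ∀ᶠ k in Filter.atTop, Y k ∈ V := hYz (hVo.mem_nhds h1V)
    have hXU : Filter.Tendsto X Filter.atTop (nhdsWithin 1 U) :=
      tendsto_nhdsWithin_iff.mpr ⟨hXz, e1.mono fun k hk => hVU ⟨hk, hX k⟩⟩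
    have hYU : Filter.Tendsto Y Filter.atTop (nhdsWithin 1 U) :=
      tendsto_nhdsWithin_iff.mpr ⟨hYz, e2.mono fun k hk => hVU ⟨hk, hY k⟩⟩
    have hddX : Filter.Tendsto (fun k => dd (X k)) Filter.atTop (nhds (dd 1)) :=
      (hddc 1 h1U).tendsto.comp hXU
    have hddY : Filter.Tendsto (fun k => dd (Y k)) Filter.atTop (nhds (dd 1)) :=
      (hddc 1 h1U).tendsto.comp hYU
    have e3 : ∀ᶠ k in Filter.atTop, dd 1 / 2 < dd (Y k) :=
      hddY.eventually (eventually_gt_nhds (by linarith))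
    have e4 : ∀ᶠ k in Filter.atTop, dd 1 / 2 < dd (X k) :=
      hddX.eventually (eventually_gt_nhds (by linarith))
    have e5 : ∀ᶠ k in Filter.atTop, |dd (X k) - dd (Y k)| < δ0 := by
      have h3 : Filter.Tendsto (fun k => dd (X k) - dd (Y k)) Filter.atTop (nhds 0) := by
        have := hddX.sub hddY; simpa using this
      have := ev_abs_lt h3 hδ0
      simpa using this
    filter_upwards [e1, e2, e3, e4, e5] with k hkV hkV' hddYk hddXk hΔdd
    rintro ⟨hYX, hG, hC⟩
    have hXU' : X k ∈ U := hVU ⟨hkV, hX k⟩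
    have hYU' : Y k ∈ U := hVU ⟨hkV', hY k⟩
    rcases eq_or_lt_of_le (hv0 _ (hY k)) with hvY0 | hvYpos
    · -- v (Y k) = 0 forces Y k = 1, hence X k = 1
      have hY1 : Y k = 1 := by
        by_contra hne
        exact absurd (hpos _ (hY k) hne) (by rw [← hvY0]; exact lt_irrefl 0)
      have hX1 : X k = 1 := le_antisymm (hX k).2 (hY1 ▸ hYX)
      rw [hX1, hY1]
      simpa using hε.le
    · have hddY0 : 0 < dd (Y k) := lt_trans (by linarith) hddYk
      have hddX0 : 0 < dd (X k) := lt_trans (by linarith) hddXk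
      have hvY : v (Y k) = d (Y k) * dd (Y k) := hdec _ hYU'
      have hvX : v (X k) = d (X k) * dd (X k) := hdec _ hXU'
      have hdY : 0 < d (Y k) := by
        by_contra hcc
        push_neg at hcc
        nlinarith
      have hdXle : d (X k) ≤ d (Y k) := hanti hYU' hXU' hYX
      have hvYG : 0 ≤ v (Y k) * G k := mul_nonneg hvYpos.le hG
      -- main inequality: v X * G ≤ v Y * G * (dd X / dd Y)
      have key1 : v (X k) * G k ≤ v (Y k) * G k * (dd (X k) / dd (Y k)) := by
        have h2 : d (X k) * dd (X k) * G k ≤ d (Y k) * dd (X k) * G k := by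
          apply mul_le_mul_of_nonneg_right _ hG
          exact mul_le_mul_of_nonneg_right hdXle hddX0.le
        have h3 : v (Y k) * G k * (dd (X k) / dd (Y k)) = d (Y k) * dd (X k) * G k := by
          rw [hvY]; field_simp
        rw [hvX, h3]; exact h2
      rcases le_or_gt (dd (X k)) (dd (Y k)) with hc1 | hc1
      · -- ratio ≤ 1, term ≤ 0
        have h2 : dd (X k) / dd (Y k) ≤ 1 := (div_le_one hddY0).mpr hc1
        have h3 : v (Y k) * G k * (dd (X k) / dd (Y k)) ≤ v (Y k) * G k * 1 :=
          mul_le_mul_of_nonneg_left h2 hvYG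
        have h4 : v (X k) * G k ≤ v (Y k) * G k := by rw [mul_one] at h3; linarith
        nlinarith [sub_mul (v (X k)) (v (Y k)) (G k)]
      · set s := (dd (X k) - dd (Y k)) / dd (Y k) with hsdef
        have hs0 : 0 ≤ s := div_nonneg (by linarith) hddY0.le
        have hratio : dd (X k) / dd (Y k) - 1 = s := by
          rw [hsdef]; field_simp
        have h2 : (v (X k) - v (Y k)) * G k ≤ v (Y k) * G k * s := by
          have h3 : v (Y k) * G k * (dd (X k) / dd (Y k)) - v (Y k) * G k
              = v (Y k) * G k * s := by rw [← hratio]; ring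
          nlinarith [sub_mul (v (X k)) (v (Y k)) (G k)]
        have h4 : v (Y k) * G k * s ≤ C' * s := by
          apply mul_le_mul_of_nonneg_right _ hs0
          exact le_trans hC (le_max_left _ _)
        have h5 : s ≤ δ0 / (dd 1 / 2) := by
          apply div_le_div₀ hδ0.le _ (by linarith) (by linarith)
          calc dd (X k) - dd (Y k) ≤ |dd (X k) - dd (Y k)| := le_abs_self _
            _ ≤ δ0 := hΔdd.le
        have h6 : δ0 / (dd 1 / 2) = ε / (C' + 1) := by
          rw [hδ0def]; field_simp
        have h7 : C' * s ≤ C' * (ε / (C' + 1)) := by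
          apply mul_le_mul_of_nonneg_left _ hC'0
          rw [← h6]; exact h5
        have h8 : C' * (ε / (C' + 1)) ≤ ε := by
          rw [mul_div_assoc', div_le_iff₀ (by positivity : (0:ℝ) < C' + 1)]
          nlinarith
        linarith
  · -- z ≠ 1 : v z > 0
    have hvz : 0 < v z := hpos z hz hz1
    have hXin : Filter.Tendsto X Filter.atTop (nhdsWithin z (Set.Icc (-1:ℝ) 1)) :=
      tendsto_nhdsWithin_iff.mpr ⟨hXz, Filter.Eventually.of_forall hX⟩
    have hYin : Filter.Tendsto Y Filter.atTop (nhdsWithin z (Set.Icc (-1:ℝ) 1)) :=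
      tendsto_nhdsWithin_iff.mpr ⟨hYz, Filter.Eventually.of_forall hY⟩
    have hvX : Filter.Tendsto (fun k => v (X k)) Filter.atTop (nhds (v z)) :=
      (hvc z hz).tendsto.comp hXin
    have hvY : Filter.Tendsto (fun k => v (Y k)) Filter.atTop (nhds (v z)) :=
      (hvc z hz).tendsto.comp hYin
    set C' := max C 0 with hC'def
    have hC'0 : 0 ≤ C' := le_max_right _ _
    set δ1 := ε * v z / (2 * (C' + 1)) with hδ1def
    have hδ1 : 0 < δ1 := by positivity
    have e1 : ∀ᶠ k in Filter.atTop, v z / 2 < v (Y k) :=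
      hvY.eventually (eventually_gt_nhds (by linarith))
    have e2 : ∀ᶠ k in Filter.atTop, |v (X k) - v (Y k)| < δ1 := by
      have h3 : Filter.Tendsto (fun k => v (X k) - v (Y k)) Filter.atTop (nhds 0) := by
        have := hvX.sub hvY; simpa using this
      simpa using ev_abs_lt h3 hδ1
    filter_upwards [e1, e2] with k h1 h2
    rintro ⟨hYX, hG, hC⟩
    have hvYk : 0 < v (Y k) := lt_trans (by linarith) h1
    have hGb : G k ≤ C' / (v z / 2) := by
      rw [le_div_iff₀ (by linarith : (0:ℝ) < v z / 2)]
      calc G k * (v z / 2) ≤ G k * v (Y k) := by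
            apply mul_le_mul_of_nonneg_left _ hG; linarith
        _ = v (Y k) * G k := mul_comm _ _
        _ ≤ C := hC
        _ ≤ C' := le_max_left _ _
    calc (v (X k) - v (Y k)) * G k ≤ |v (X k) - v (Y k)| * G k :=
          mul_le_mul_of_nonneg_right (le_abs_self _) hG
      _ ≤ δ1 * (C' / (v z / 2)) := by
          apply mul_le_mul h2.le hGb hG hδ1.le
      _ ≤ ε := by
          have h6 : δ1 * (C' / (v z / 2)) = ε * (C' / (C' + 1)) := by
            rw [hδ1def]; field_simp
          rw [h6]
          have h7 : C' / (C' + 1) ≤ 1 := by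
            rw [div_le_one (by positivity)]; linarith
          nlinarith


set_option maxHeartbeats 2000000 in
/-- Comparison principle for the one-dimensional Ehrenfest Hamilton–Jacobi equation
`f(x) − λH(x,f'(x)) − h(x) = 0` on `E = [-1,1]`, where
`H(x,p) = v₊(x)(e^{2p} − 1) + v₋(x)(e^{−2p} − 1)` and `v₊, v₋` satisfy the
positivity/decomposition conditions at the boundary: every bounded usc viscosity
subsolution `u` and bounded lsc viscosity supersolution `w` satisfy `u ≤ w`. -/
theorem stmt_10 (vp vm : ℝ → ℝ)
    (hvpc : ContinuousOn vp (Set.Icc (-1) 1)) (hvmc : ContinuousOn vm (Set.Icc (-1) 1))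
    (hvp0 : ∀ x ∈ Set.Icc (-1:ℝ) 1, 0 ≤ vp x) (hvm0 : ∀ x ∈ Set.Icc (-1:ℝ) 1, 0 ≤ vm x)
    -- conditions on v₊ : either identically zero, or positive away from 1 and
    -- admitting a decreasing × continuous-nonvanishing decomposition near 1
    (hvp : (∀ x ∈ Set.Icc (-1:ℝ) 1, vp x = 0) ∨
      ((∀ x ∈ Set.Icc (-1:ℝ) 1, x ≠ 1 → 0 < vp x) ∧ vp 1 = 0 ∧
        ∃ U ∈ nhdsWithin (1:ℝ) (Set.Icc (-1:ℝ) 1), ∃ vpd vpdd : ℝ → ℝ,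
          (∀ x ∈ U, vp x = vpd x * vpdd x) ∧ AntitoneOn vpd U ∧
          ContinuousOn vpdd U ∧ vpdd 1 ≠ 0))
    -- conditions on v₋ : symmetric at −1, with increasing monotone factor
    (hvm : (∀ x ∈ Set.Icc (-1:ℝ) 1, vm x = 0) ∨
      ((∀ x ∈ Set.Icc (-1:ℝ) 1, x ≠ -1 → 0 < vm x) ∧ vm (-1) = 0 ∧
        ∃ U ∈ nhdsWithin (-1:ℝ) (Set.Icc (-1:ℝ) 1), ∃ vmd vmdd : ℝ → ℝ,
          (∀ x ∈ U, vm x = vmd x * vmdd x) ∧ MonotoneOn vmd U ∧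
          ContinuousOn vmdd U ∧ vmdd (-1) ≠ 0))
    (H : ℝ → ℝ → ℝ)
    (hH : ∀ x p, H x p = vp x * (exp (2 * p) - 1) + vm x * (exp (-(2 * p)) - 1))
    (lam : ℝ) (hlam : 0 < lam) (h : ℝ → ℝ) (hh : ContinuousOn h (Set.Icc (-1) 1))
    (u w : ℝ → ℝ)
    (hu_usc : UpperSemicontinuousOn u (Set.Icc (-1) 1))
    (hw_lsc : LowerSemicontinuousOn w (Set.Icc (-1) 1))
    (hub : ∃ M, ∀ x ∈ Set.Icc (-1:ℝ) 1, |u x| ≤ M)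
    (hwb : ∃ M, ∀ x ∈ Set.Icc (-1:ℝ) 1, |w x| ≤ M)
    -- u is a viscosity subsolution of f − λH(·, f') − h = 0:
    (hu_sub : ∀ f : ℝ → ℝ, ContDiff ℝ 1 f → ∀ x ∈ Set.Icc (-1:ℝ) 1,
      IsMaxOn (fun y => u y - f y) (Set.Icc (-1) 1) x →
      u x - lam * H x (deriv f x) - h x ≤ 0)
    -- w is a viscosity supersolution of f − λH(·, f') − h = 0:
    (hw_super : ∀ f : ℝ → ℝ, ContDiff ℝ 1 f → ∀ x ∈ Set.Icc (-1:ℝ) 1,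
      IsMinOn (fun y => w y - f y) (Set.Icc (-1) 1) x →
      0 ≤ w x - lam * H x (deriv f x) - h x) :
    ∀ x ∈ Set.Icc (-1:ℝ) 1, u x ≤ w x := by
  intro xb hxb
  rw [← sub_nonpos]
  obtain ⟨Mu, hMu⟩ := hub
  obtain ⟨Mw, hMw⟩ := hwb
  obtain ⟨Mh, hMh⟩ := isCompact_Icc.exists_bound_of_continuousOn hh
  obtain ⟨Mvp, hMvp⟩ := isCompact_Icc.exists_bound_of_continuousOn hvpc
  obtain ⟨Mvm, hMvm⟩ := isCompact_Icc.exists_bound_of_continuousOn hvmc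
  simp only [Real.norm_eq_abs] at hMh hMvp hMvm
  -- the doubled functional has a maximizer
  have hS : IsCompact ((Set.Icc (-1:ℝ) 1) ×ˢ (Set.Icc (-1:ℝ) 1)) :=
    isCompact_Icc.prod isCompact_Icc
  have husc : ∀ n : ℕ, UpperSemicontinuousOn
      (fun q : ℝ × ℝ => u q.1 - w q.2 - ((n:ℝ)+1) * (q.1 - q.2)^2 / 2)
      ((Set.Icc (-1:ℝ) 1) ×ˢ (Set.Icc (-1:ℝ) 1)) := by
    intro n
    have heq : (fun q : ℝ × ℝ => u q.1 - w q.2 - ((n:ℝ)+1) * (q.1 - q.2)^2 / 2)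
        = fun q : ℝ × ℝ => u q.1 + ((-(w q.2)) + (-(((n:ℝ)+1) * (q.1 - q.2)^2 / 2))) := by
      funext q; ring
    rw [heq]
    intro q hq
    have hfst : Filter.Tendsto (fun r : ℝ × ℝ => r.1)
        (nhdsWithin q ((Set.Icc (-1:ℝ) 1) ×ˢ (Set.Icc (-1:ℝ) 1)))
        (nhdsWithin q.1 (Set.Icc (-1:ℝ) 1)) :=
      continuous_fst.continuousWithinAt.tendsto_nhdsWithin (fun r hr => hr.1)
    have hsnd : Filter.Tendsto (fun r : ℝ × ℝ => r.2)
        (nhdsWithin q ((Set.Icc (-1:ℝ) 1) ×ˢ (Set.Icc (-1:ℝ) 1)))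
        (nhdsWithin q.2 (Set.Icc (-1:ℝ) 1)) :=
      continuous_snd.continuousWithinAt.tendsto_nhdsWithin (fun r hr => hr.2)
    have h1 : UpperSemicontinuousWithinAt (fun r : ℝ × ℝ => u r.1)
        ((Set.Icc (-1:ℝ) 1) ×ˢ (Set.Icc (-1:ℝ) 1)) q :=
      fun b hb => hfst.eventually (hu_usc q.1 hq.1 b hb)
    have h2 : UpperSemicontinuousWithinAt (fun r : ℝ × ℝ => -(w r.2))
        ((Set.Icc (-1:ℝ) 1) ×ˢ (Set.Icc (-1:ℝ) 1)) q := by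
      intro b hb
      have hb' := hw_lsc q.2 hq.2 (-b) (by linarith [neg_lt.mp hb])
      filter_upwards [hsnd.eventually hb'] with r hr
      linarith
    have h3 : UpperSemicontinuousWithinAt
        (fun r : ℝ × ℝ => -(((n:ℝ)+1) * (r.1 - r.2)^2 / 2))
        ((Set.Icc (-1:ℝ) 1) ×ˢ (Set.Icc (-1:ℝ) 1)) q :=
      (Continuous.continuousWithinAt (by continuity)).upperSemicontinuousWithinAt
    exact h1.add (h2.add h3)
  have hmaxex : ∀ n : ℕ, ∃ p ∈ (Set.Icc (-1:ℝ) 1) ×ˢ (Set.Icc (-1:ℝ) 1),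
      ∀ r ∈ (Set.Icc (-1:ℝ) 1) ×ˢ (Set.Icc (-1:ℝ) 1),
        u r.1 - w r.2 - ((n:ℝ)+1) * (r.1 - r.2)^2 / 2
          ≤ u p.1 - w p.2 - ((n:ℝ)+1) * (p.1 - p.2)^2 / 2 :=
    fun n => usc_exists_max hS ⟨(xb, xb), ⟨hxb, hxb⟩⟩ (husc n)
  choose q hqmem hqmax using hmaxex
  set x : ℕ → ℝ := fun n => (q n).1 with hxdef
  set y : ℕ → ℝ := fun n => (q n).2 with hydef
  have hxI : ∀ n, x n ∈ Set.Icc (-1:ℝ) 1 := fun n => (hqmem n).1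
  have hyI : ∀ n, y n ∈ Set.Icc (-1:ℝ) 1 := fun n => (hqmem n).2
  have hM : ∀ n : ℕ, ∀ a ∈ Set.Icc (-1:ℝ) 1, ∀ b ∈ Set.Icc (-1:ℝ) 1,
      u a - w b - ((n:ℝ)+1) * (a - b)^2 / 2
        ≤ u (x n) - w (y n) - ((n:ℝ)+1) * (x n - y n)^2 / 2 :=
    fun n a ha b hb => hqmax n (a, b) ⟨ha, hb⟩
  -- basic consequences
  have hcn' : ∀ n : ℕ, u xb - w xb ≤ u (x n) - w (y n) - ((n:ℝ)+1) * (x n - y n)^2 / 2 := by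
    intro n
    have h1 := hM n xb hxb xb hxb
    have h2 : ((n:ℝ)+1) * (xb - xb)^2 / 2 = 0 := by rw [sub_self]; ring
    rw [h2] at h1
    linarith
  have hcn : ∀ n : ℕ, u xb - w xb ≤ u (x n) - w (y n) := by
    intro n
    have h2 : (0:ℝ) ≤ ((n:ℝ)+1) * (x n - y n)^2 / 2 := by positivity
    linarith [hcn' n]
  have hpen : ∀ n : ℕ, ((n:ℝ)+1) * (x n - y n)^2 / 2 ≤ Mu + Mw - (u xb - w xb) := by
    intro n
    have h1 := (abs_le.mp (hMu _ (hxI n))).2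
    have h2 := (abs_le.mp (hMw _ (hyI n))).1
    linarith [hcn' n]
  have hd2 : ∀ n : ℕ, (x n - y n)^2 ≤ (2*(Mu + Mw - (u xb - w xb))) * (1/((n:ℝ)+1)) := by
    intro n
    have hA : (0:ℝ) < (n:ℝ)+1 := by positivity
    have h2 : (x n - y n)^2 * ((n:ℝ)+1) ≤ 2*(Mu + Mw - (u xb - w xb)) := by
      nlinarith [hpen n]
    calc (x n - y n)^2 = ((x n - y n)^2 * ((n:ℝ)+1)) * (1/((n:ℝ)+1)) := by
          field_simp
      _ ≤ (2*(Mu + Mw - (u xb - w xb))) * (1/((n:ℝ)+1)) :=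
          mul_le_mul_of_nonneg_right h2 (by positivity)
  have hdiff0 : Filter.Tendsto (fun n => x n - y n) Filter.atTop (nhds 0) := by
    have hB0 : Filter.Tendsto
        (fun n : ℕ => (2*(Mu + Mw - (u xb - w xb))) * (1/((n:ℝ)+1)))
        Filter.atTop (nhds 0) := by
      have h2 := tendsto_one_div_add_atTop_nhds_zero_nat.const_mul
        (2*(Mu + Mw - (u xb - w xb)))
      simpa using h2
    have hnorm : ∀ n : ℕ, ‖x n - y n‖
        ≤ Real.sqrt ((2*(Mu + Mw - (u xb - w xb))) * (1/((n:ℝ)+1))) := by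
      intro n
      rw [Real.norm_eq_abs, ← Real.sqrt_sq_eq_abs]
      exact Real.sqrt_le_sqrt (hd2 n)
    have hsq : Filter.Tendsto
        (fun n : ℕ => Real.sqrt ((2*(Mu + Mw - (u xb - w xb))) * (1/((n:ℝ)+1))))
        Filter.atTop (nhds 0) := by
      have h3 := (Real.continuous_sqrt.tendsto (0:ℝ)).comp hB0
      simpa [Function.comp_def] using h3
    exact squeeze_zero_norm hnorm hsq
  -- viscosity inequalities at the maximizers
  have hsubn : ∀ n : ℕ, u (x n) ≤ lam * H (x n) (((n:ℝ)+1) * (x n - y n)) + h (x n) := by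
    intro n
    have hfc : ContDiff ℝ 1 (fun s : ℝ => ((n:ℝ)+1)/2 * (s - y n)^2) :=
      contDiff_const.mul ((contDiff_id.sub contDiff_const).pow 2)
    have hder : HasDerivAt (fun s : ℝ => ((n:ℝ)+1)/2 * (s - y n)^2)
        (((n:ℝ)+1) * (x n - y n)) (x n) := by
      have h1 : HasDerivAt (fun s : ℝ => s - y n) 1 (x n) :=
        (hasDerivAt_id (x n)).sub_const (y n)
      have h3 := (h1.fun_pow 2).const_mul (((n:ℝ)+1)/2)
      refine h3.congr_deriv ?_
      simp
      ring
    have hmax : IsMaxOn (fun s => u s - ((n:ℝ)+1)/2 * (s - y n)^2)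
        (Set.Icc (-1:ℝ) 1) (x n) := by
      apply isMaxOn_iff.mpr
      intro s hs
      have h1 := hM n s hs (y n) (hyI n)
      linarith
    have h2 := hu_sub _ hfc (x n) (hxI n) hmax
    rw [hder.deriv] at h2
    linarith
  have hsupn : ∀ n : ℕ, lam * H (y n) (((n:ℝ)+1) * (x n - y n)) + h (y n) ≤ w (y n) := by
    intro n
    have hfc : ContDiff ℝ 1 (fun s : ℝ => -(((n:ℝ)+1)/2) * (x n - s)^2) :=
      contDiff_const.mul ((contDiff_const.sub contDiff_id).pow 2)
    have hder : HasDerivAt (fun s : ℝ => -(((n:ℝ)+1)/2) * (x n - s)^2)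
        (((n:ℝ)+1) * (x n - y n)) (y n) := by
      have h1 : HasDerivAt (fun s : ℝ => x n - s) (-1) (y n) :=
        HasDerivAt.const_sub (x n) (hasDerivAt_id (y n))
      have h3 := (h1.fun_pow 2).const_mul (-(((n:ℝ)+1)/2))
      refine h3.congr_deriv ?_
      simp
      ring
    have hmin : IsMinOn (fun s => w s - (-(((n:ℝ)+1)/2) * (x n - s)^2))
        (Set.Icc (-1:ℝ) 1) (y n) := by
      apply isMinOn_iff.mpr
      intro s hs
      have h1 := hM n (x n) (hxI n) s hs
      linarith
    have h2 := hw_super _ hfc (y n) (hyI n) hmin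
    rw [hder.deriv] at h2
    linarith
  -- extract a converging subsequence
  obtain ⟨z, hzI, φ, hφmono, hXz⟩ := isCompact_Icc.tendsto_subseq hxI
  have hXz' : Filter.Tendsto (fun k => x (φ k)) Filter.atTop (nhds z) := hXz
  have hYz : Filter.Tendsto (fun k => y (φ k)) Filter.atTop (nhds z) := by
    have hdφ := hdiff0.comp hφmono.tendsto_atTop
    have h2 := hXz'.sub hdφ
    simp only [Function.comp] at h2
    simpa using h2
  have hXin : Filter.Tendsto (fun k => x (φ k)) Filter.atTop
      (nhdsWithin z (Set.Icc (-1:ℝ) 1)) :=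
    tendsto_nhdsWithin_iff.mpr ⟨hXz', Filter.Eventually.of_forall (fun k => hxI (φ k))⟩
  have hYin : Filter.Tendsto (fun k => y (φ k)) Filter.atTop
      (nhdsWithin z (Set.Icc (-1:ℝ) 1)) :=
    tendsto_nhdsWithin_iff.mpr ⟨hYz, Filter.Eventually.of_forall (fun k => hyI (φ k))⟩
  -- membership helper for reflection
  have hnegmem : ∀ t ∈ Set.Icc (-1:ℝ) 1, -t ∈ Set.Icc (-1:ℝ) 1 := by
    intro t ht
    exact ⟨by linarith [ht.2], by linarith [ht.1]⟩
  -- reflected hypotheses for vm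
  have hvm' : (∀ t ∈ Set.Icc (-1:ℝ) 1, vm (-t) = 0) ∨
      ((∀ t ∈ Set.Icc (-1:ℝ) 1, t ≠ 1 → 0 < vm (-t)) ∧ vm (-(1:ℝ)) = 0 ∧
        ∃ U ∈ nhdsWithin (1:ℝ) (Set.Icc (-1:ℝ) 1), ∃ d dd : ℝ → ℝ,
          (∀ t ∈ U, vm (-t) = d t * dd t) ∧ AntitoneOn d U ∧
          ContinuousOn dd U ∧ dd 1 ≠ 0) := by
    rcases hvm with h0 | ⟨hpos, hvm1, U, hU, md, mdd, hdecm, hmono, hmddc, hmdd1⟩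
    · exact Or.inl (fun t ht => h0 (-t) (hnegmem t ht))
    · right
      refine ⟨fun t ht hne => hpos (-t) (hnegmem t ht) (fun hc => hne (by linarith)),
        hvm1, ?_⟩
      obtain ⟨V, hVo, hmV, hVsub⟩ := mem_nhdsWithin.mp hU
      refine ⟨(fun t : ℝ => -t) ⁻¹' U, ?_, fun t => md (-t), fun t => mdd (-t),
        fun t ht => hdecm (-t) ht, ?_, ?_, by simpa using hmdd1⟩
      · apply mem_nhdsWithin.mpr
        refine ⟨(fun t : ℝ => -t) ⁻¹' V, hVo.preimage continuous_neg, by simpa using hmV, ?_⟩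
        intro t ht
        exact hVsub ⟨ht.1, hnegmem t ht.2⟩
      · intro a ha b hb hab
        exact hmono hb ha (neg_le_neg hab)
      · exact hmddc.comp continuous_neg.continuousOn (fun t ht => ht)
  have hvmc' : ContinuousOn (fun t => vm (-t)) (Set.Icc (-1:ℝ) 1) :=
    hvmc.comp continuous_neg.continuousOn hnegmem
  have hvm0' : ∀ t ∈ Set.Icc (-1:ℝ) 1, 0 ≤ vm (-t) :=
    fun t ht => hvm0 (-t) (hnegmem t ht)
  -- set up the final epsilon argument
  have hfinal : ∀ ε : ℝ, 0 < ε → u xb - w xb ≤ ε := by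
    intro ε hε
    have hε2 : (0:ℝ) < ε/(3*lam) := by positivity
    -- eventualities
    have hhX : Filter.Tendsto (fun k => h (x (φ k))) Filter.atTop (nhds (h z)) :=
      (hh z hzI).tendsto.comp hXin
    have hhY : Filter.Tendsto (fun k => h (y (φ k))) Filter.atTop (nhds (h z)) :=
      (hh z hzI).tendsto.comp hYin
    have E1 : ∀ᶠ k in Filter.atTop, h (x (φ k)) - h (y (φ k)) < ε/3 := by
      have h1 : Filter.Tendsto (fun k => h (x (φ k)) - h (y (φ k)))
          Filter.atTop (nhds 0) := by
        have := hhX.sub hhY; simpa using this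
      filter_upwards [ev_abs_lt h1 (by positivity : (0:ℝ) < ε/3)] with k hk
      have h2 := (abs_lt.mp (by simpa using hk)).2
      linarith
    have E2 : ∀ᶠ k in Filter.atTop, |vp (x (φ k)) - vp (y (φ k))| < ε/(3*lam) := by
      have h1 : Filter.Tendsto (fun k => vp (x (φ k)) - vp (y (φ k)))
          Filter.atTop (nhds 0) := by
        have := ((hvpc z hzI).tendsto.comp hXin).sub ((hvpc z hzI).tendsto.comp hYin)
        simpa using this
      simpa using ev_abs_lt h1 hε2
    have E3 : ∀ᶠ k in Filter.atTop, |vm (x (φ k)) - vm (y (φ k))| < ε/(3*lam) := by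
      have h1 : Filter.Tendsto (fun k => vm (x (φ k)) - vm (y (φ k)))
          Filter.atTop (nhds 0) := by
        have := ((hvmc z hzI).tendsto.comp hXin).sub ((hvmc z hzI).tendsto.comp hYin)
        simpa using this
      simpa using ev_abs_lt h1 hε2
    have E4 := key_term vp hvpc hvp0 hvp (fun k => x (φ k)) (fun k => y (φ k))
      (fun k => hxI (φ k)) (fun k => hyI (φ k)) z hzI hXz' hYz
      (fun k => exp (2 * (((φ k : ℝ)+1) * (x (φ k) - y (φ k)))) - 1)
      ((Mw + Mh)/lam + Mvp + Mvm) (ε/(3*lam)) hε2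
    have E5 := key_term (fun t => vm (-t)) hvmc' hvm0' hvm'
      (fun k => -(x (φ k))) (fun k => -(y (φ k)))
      (fun k => hnegmem _ (hxI (φ k))) (fun k => hnegmem _ (hyI (φ k)))
      (-z) (hnegmem z hzI) hXz'.neg hYz.neg
      (fun k => exp (-(2 * (((φ k : ℝ)+1) * (x (φ k) - y (φ k))))) - 1)
      ((Mw + Mh)/lam + Mvp + Mvm) (ε/(3*lam)) hε2
    simp only [neg_neg] at E5
    obtain ⟨k, hk1, hk2, hk3, hk4, hk5⟩ := (E1.and (E2.and (E3.and (E4.and E5)))).exists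
    -- notation for this k
    have hsub1 := hsubn (φ k)
    have hsup1 := hsupn (φ k)
    have hc1 := hcn (φ k)
    have haI := hxI (φ k)
    have hbI := hyI (φ k)
    have hvpb := hvp0 _ hbI
    have hvmb := hvm0 _ hbI
    have hvpbM := (abs_le.mp (hMvp _ hbI)).2
    have hvmbM := (abs_le.mp (hMvm _ hbI)).2
    have hvpbM0 : (0:ℝ) ≤ Mvp := le_trans (abs_nonneg _) (hMvp _ hbI)
    have hvmbM0 : (0:ℝ) ≤ Mvm := le_trans (abs_nonneg _) (hMvm _ hbI)
    have hwbM := (abs_le.mp (hMw _ hbI)).2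
    have hhbM := (abs_le.mp (hMh _ hbI)).1
    set a := x (φ k) with hadef
    set b := y (φ k) with hbdef
    set pk := ((φ k : ℝ)+1) * (a - b) with hpkdef
    -- bound on H at y from the supersolution inequality
    have hHb : vp b * (exp (2 * pk) - 1) + vm b * (exp (-(2 * pk)) - 1)
        ≤ (Mw + Mh)/lam := by
      have h1 : lam * H b pk ≤ w b - h b := by linarith
      rw [hH] at h1
      have h2 : vp b * (exp (2 * pk) - 1) + vm b * (exp (-(2 * pk)) - 1)
          ≤ (w b - h b)/lam := by
        rw [le_div_iff₀ hlam]
        nlinarith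
      have h3 : (w b - h b)/lam ≤ (Mw + Mh)/lam := by
        gcongr
        linarith
      linarith
    have hHdiff : lam * (H a pk - H b pk)
        = lam * ((vp a - vp b) * (exp (2 * pk) - 1)
          + (vm a - vm b) * (exp (-(2 * pk)) - 1)) := by
      rw [hH, hH]; ring
    have hmain : u xb - w xb ≤ (h a - h b)
        + lam * ((vp a - vp b) * (exp (2 * pk) - 1)
          + (vm a - vm b) * (exp (-(2 * pk)) - 1)) := by
      nlinarith [hsub1, hsup1, hc1, hHdiff]
    have hlam3 : lam * (ε/(3*lam) + ε/(3*lam)) = 2*ε/3 := by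
      field_simp
      ring
    have hexp1pos := (Real.exp_pos (2 * pk)).le
    have hexp2pos := (Real.exp_pos (-(2 * pk))).le
    rcases le_total b a with hba | hab
    · -- pk ≥ 0
      have hppnn : 0 ≤ pk := by
        rw [hpkdef]
        apply mul_nonneg (by positivity)
        linarith
      have hG1 : 0 ≤ exp (2 * pk) - 1 := by
        nlinarith [Real.add_one_le_exp (2 * pk)]
      have hexp2le : exp (-(2 * pk)) ≤ 1 := by
        have h4 := Real.exp_le_exp.mpr (show -(2*pk) ≤ 0 by linarith)
        simpa using h4
      have hCb : vp b * (exp (2 * pk) - 1) ≤ (Mw + Mh)/lam + Mvp + Mvm := by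
        nlinarith [mul_nonneg hvmb hexp2pos]
      have T1b := hk4 ⟨hba, hG1, hCb⟩
      have T2b : (vm a - vm b) * (exp (-(2 * pk)) - 1) ≤ ε/(3*lam) := by
        have habs2 : |exp (-(2 * pk)) - 1| ≤ 1 := abs_le.mpr ⟨by linarith, by linarith⟩
        calc (vm a - vm b) * (exp (-(2 * pk)) - 1)
            ≤ |(vm a - vm b) * (exp (-(2 * pk)) - 1)| := le_abs_self _
          _ = |vm a - vm b| * |exp (-(2 * pk)) - 1| := abs_mul _ _
          _ ≤ |vm a - vm b| * 1 := mul_le_mul_of_nonneg_left habs2 (abs_nonneg _)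
          _ ≤ ε/(3*lam) := by rw [mul_one]; exact hk3.le
      have h10 : lam * ((vp a - vp b) * (exp (2 * pk) - 1)
            + (vm a - vm b) * (exp (-(2 * pk)) - 1))
          ≤ lam * (ε/(3*lam) + ε/(3*lam)) :=
        mul_le_mul_of_nonneg_left (by linarith) hlam.le
      linarith
    · -- pk ≤ 0
      have hppnp : pk ≤ 0 := by
        rw [hpkdef]
        apply mul_nonpos_of_nonneg_of_nonpos (by positivity)
        linarith
      have hG2 : 0 ≤ exp (-(2 * pk)) - 1 := by
        nlinarith [Real.add_one_le_exp (-(2 * pk))]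
      have hexp1le : exp (2 * pk) ≤ 1 := by
        have h4 := Real.exp_le_exp.mpr (show 2*pk ≤ 0 by linarith)
        simpa using h4
      have hCb : vm b * (exp (-(2 * pk)) - 1) ≤ (Mw + Mh)/lam + Mvp + Mvm := by
        nlinarith [mul_nonneg hvpb hexp1pos]
      have T2b := hk5 ⟨neg_le_neg hab, hG2, hCb⟩
      have T1b : (vp a - vp b) * (exp (2 * pk) - 1) ≤ ε/(3*lam) := by
        have habs1 : |exp (2 * pk) - 1| ≤ 1 := abs_le.mpr ⟨by linarith, by linarith⟩
        calc (vp a - vp b) * (exp (2 * pk) - 1)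
            ≤ |(vp a - vp b) * (exp (2 * pk) - 1)| := le_abs_self _
          _ = |vp a - vp b| * |exp (2 * pk) - 1| := abs_mul _ _
          _ ≤ |vp a - vp b| * 1 := mul_le_mul_of_nonneg_left habs1 (abs_nonneg _)
          _ ≤ ε/(3*lam) := by rw [mul_one]; exact hk2.le
      have h10 : lam * ((vp a - vp b) * (exp (2 * pk) - 1)
            + (vm a - vm b) * (exp (-(2 * pk)) - 1))
          ≤ lam * (ε/(3*lam) + ε/(3*lam)) :=
        mul_le_mul_of_nonneg_left (by linarith) hlam.le
      linarith
  by_contra hcontra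
  push_neg at hcontra
  have := hfinal ((u xb - w xb)/2) (by linarith)
  linarith
end

section
/- Let v : [-1,1] → [0,∞) be continuous with v(x) = v_†(x) v_‡(x) on a neighbourhood U of −1, where v_† is increasing and v_‡ is continuous with v_‡(−1) ≠ 0, and v(y) > 0 for y ∈ U with y > −1. Let x_k ≤ y_k be sequences in U converging to −1 and c_k → ∞ with u_k := v(y_k)(e^{c_k} − 1) bounded. Then liminf_k [v(x_k) − v(y_k)](e^{c_k} − 1) ≤ 0. -/
open Real Filter Topology

/-- The decomposition argument in the comparison principle proof: with
`v = v_† · v_‡` on a neighbourhood `U` of `−1` in `[-1,1]`, `v_†` increasing, `v_‡`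
continuous and nonvanishing at `−1`, `v > 0` on `U ∩ (−1,∞)`, sequences
`x_k ≤ y_k → −1` in `U`, `c_k → ∞` with `u_k = v(y_k)(e^{c_k} − 1)` bounded, one has
`liminf_k [v(x_k) − v(y_k)](e^{c_k} − 1) ≤ 0`. -/
theorem stmt_12 (v vd vdd : ℝ → ℝ) (U : Set ℝ)
    (hU : U ∈ nhdsWithin (-1:ℝ) (Set.Icc (-1:ℝ) 1)) (hUsub : U ⊆ Set.Icc (-1:ℝ) 1)
    (hvc : ContinuousOn v (Set.Icc (-1) 1))
    (hv0 : ∀ x ∈ Set.Icc (-1:ℝ) 1, 0 ≤ v x)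
    (hdec : ∀ x ∈ U, v x = vd x * vdd x)
    (hvd : MonotoneOn vd U) (hvdd : ContinuousOn vdd U) (hvdd1 : vdd (-1) ≠ 0)
    (hpos : ∀ y ∈ U, -1 < y → 0 < v y)
    (x y : ℕ → ℝ) (c : ℕ → ℝ)
    (hxU : ∀ k, x k ∈ U) (hyU : ∀ k, y k ∈ U) (hxy : ∀ k, x k ≤ y k)
    (hxlim : Tendsto x atTop (𝓝 (-1))) (hylim : Tendsto y atTop (𝓝 (-1)))
    (hc : Tendsto c atTop atTop)
    (hbd : ∃ M : ℝ, ∀ k, v (y k) * (exp (c k) - 1) ≤ M) :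
    Filter.liminf (fun k => (v (x k) - v (y k)) * (exp (c k) - 1)) atTop ≤ 0 := by
  obtain ⟨M, hM⟩ := hbd
  have h1Icc : (-1:ℝ) ∈ Set.Icc (-1:ℝ) 1 := by norm_num
  have h1U : (-1:ℝ) ∈ U := mem_of_mem_nhdsWithin h1Icc hU
  -- E tends to atTop
  have hE : Tendsto (fun k => exp (c k) - 1) atTop atTop := by
    have := tendsto_exp_atTop.comp hc
    exact tendsto_atTop_add_const_right atTop (-1) this
  -- y tends to -1 within U
  have hyU' : Tendsto y atTop (𝓝[U] (-1)) :=
    tendsto_nhdsWithin_iff.mpr ⟨hylim, Eventually.of_forall hyU⟩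
  have hxU' : Tendsto x atTop (𝓝[U] (-1)) :=
    tendsto_nhdsWithin_iff.mpr ⟨hxlim, Eventually.of_forall hxU⟩
  have hyIcc : Tendsto y atTop (𝓝[Set.Icc (-1:ℝ) 1] (-1)) :=
    tendsto_nhdsWithin_iff.mpr ⟨hylim, Eventually.of_forall fun k => hUsub (hyU k)⟩
  have hvy : Tendsto (fun k => v (y k)) atTop (𝓝 (v (-1))) :=
    (hvc (-1) h1Icc).tendsto.comp hyIcc
  -- v(-1) = 0
  have hv1 : v (-1) = 0 := by
    have hvy0 : Tendsto (fun k => v (y k)) atTop (𝓝 0) := by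
      have hub : ∀ᶠ k in atTop, v (y k) ≤ M / (exp (c k) - 1) := by
        filter_upwards [hE.eventually_ge_atTop 1] with k hk
        have h0 : (0:ℝ) < exp (c k) - 1 := by linarith
        exact (le_div_iff₀ h0).mpr (hM k)
      exact squeeze_zero' (Eventually.of_forall fun k => hv0 _ (hUsub (hyU k))) hub
        (tendsto_const_nhds.div_atTop hE)
    exact tendsto_nhds_unique hvy hvy0
  -- vd(-1) = 0
  have hvd1 : vd (-1) = 0 := by
    have := hdec (-1) h1U
    rw [hv1] at this
    rcases mul_eq_zero.mp this.symm with h | h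
    · exact h
    · exact absurd h hvdd1
  -- vdd(-1) > 0 (the negative case is contradictory)
  have hvdd1pos : 0 < vdd (-1) := by
    rcases hvdd1.lt_or_gt with hneg | hpos'
    · exfalso
      -- find z ∈ U with -1 < z and vdd z < 0
      have hT : vdd ⁻¹' Set.Iio 0 ∈ 𝓝[U] (-1) := hvdd (-1) h1U (Iio_mem_nhds hneg)
      have hle : 𝓝[Set.Icc (-1:ℝ) 1] (-1) ≤ 𝓝[U] (-1) := nhdsWithin_le_of_mem hU
      have hmem : (vdd ⁻¹' Set.Iio 0) ∩ U ∈ 𝓝[Set.Ioc (-1:ℝ) 1] (-1) := by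
        apply nhdsWithin_mono (-1) Set.Ioc_subset_Icc_self
        exact Filter.inter_mem (hle hT) hU
      have hne : (𝓝[Set.Ioc (-1:ℝ) 1] (-1)).NeBot := by
        rw [nhdsWithin_Ioc_eq_nhdsGT (by norm_num : (-1:ℝ) < 1)]
        infer_instance
      obtain ⟨z, hz, hzIoc⟩ := Filter.nonempty_of_mem (Filter.inter_mem hmem self_mem_nhdsWithin)
      have hz1 : -1 < z := hzIoc.1
      have hzU : z ∈ U := hz.2
      have hvz : 0 < v z := hpos z hzU hz1
      have hvdz : 0 ≤ vd z := hvd1 ▸ hvd h1U hzU (le_of_lt hz1)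
      have hvddz : vdd z < 0 := hz.1
      have : v z = vd z * vdd z := hdec z hzU
      nlinarith [mul_nonpos_of_nonneg_of_nonpos hvdz (le_of_lt hvddz)]
    · exact hpos'
  -- ratio tends to 1
  have hvddx : Tendsto (fun k => vdd (x k)) atTop (𝓝 (vdd (-1))) :=
    (hvdd (-1) h1U).tendsto.comp hxU'
  have hvddy : Tendsto (fun k => vdd (y k)) atTop (𝓝 (vdd (-1))) :=
    (hvdd (-1) h1U).tendsto.comp hyU'
  have hr : Tendsto (fun k => vdd (x k) / vdd (y k)) atTop (𝓝 1) := by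
    have := hvddx.div hvddy hvdd1
    rwa [div_self hvdd1] at this
  set M' : ℝ := max M 1 with hM'
  have hM'pos : (0:ℝ) < M' := lt_of_lt_of_le one_pos (le_max_right _ _)
  set g : ℕ → ℝ := fun k => |vdd (x k) / vdd (y k) - 1| * M' with hg
  have hg0 : Tendsto g atTop (𝓝 0) := by
    have : Tendsto g atTop (𝓝 (|1 - 1| * M')) :=
      ((hr.sub_const 1).abs).mul_const M'
    simpa using this
  -- eventual key inequality
  have hkey : ∀ᶠ k in atTop, (v (x k) - v (y k)) * (exp (c k) - 1) ≤ g k := by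
    filter_upwards [hE.eventually_ge_atTop 0,
      hvddx.eventually_const_lt (half_lt_self hvdd1pos),
      hvddy.eventually_const_lt (half_lt_self hvdd1pos)] with k hEk hxk hyk
    have hxpos : 0 < vdd (x k) := lt_of_lt_of_le (half_pos hvdd1pos) (le_of_lt hxk)
    have hypos : 0 < vdd (y k) := lt_of_lt_of_le (half_pos hvdd1pos) (le_of_lt hyk)
    set r : ℝ := vdd (x k) / vdd (y k) with hrdef
    have hgk : g k = |r - 1| * M' := rfl
    have hX1 : (-1:ℝ) ≤ x k := (hUsub (hxU k)).1
    rcases eq_or_lt_of_le ((hX1.trans (hxy k)) : (-1:ℝ) ≤ y k) with hy1 | hy1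
    · -- y k = -1, hence x k = -1 and the LHS is 0
      have hx1 : x k = -1 := le_antisymm (hy1 ▸ hxy k) hX1
      rw [← hy1, hx1]
      simp only [sub_self, zero_mul]
      positivity
    · -- y k > -1
      have hvypos : 0 < v (y k) := hpos _ (hyU k) hy1
      have hvdx0 : 0 ≤ vd (x k) := hvd1 ▸ hvd h1U (hxU k) hX1
      have hvdxy : vd (x k) ≤ vd (y k) := hvd (hxU k) (hyU k) (hxy k)
      have hvxle : v (x k) ≤ r * v (y k) := by
        have hrv : r * v (y k) = vd (y k) * vdd (x k) := by
          rw [hdec _ (hyU k), hrdef]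
          field_simp
        rw [hdec _ (hxU k), hrv]
        exact mul_le_mul_of_nonneg_right hvdxy (le_of_lt hxpos)
      have huk : v (y k) * (exp (c k) - 1) ≤ M' := (hM k).trans (le_max_left _ _)
      have huk0 : 0 ≤ v (y k) * (exp (c k) - 1) := mul_nonneg (le_of_lt hvypos) hEk
      have h1 : (v (x k) - v (y k)) * (exp (c k) - 1) ≤ (r - 1) * (v (y k) * (exp (c k) - 1)) := by
        have := mul_le_mul_of_nonneg_right (sub_le_sub_right hvxle (v (y k))) hEk
        calc (v (x k) - v (y k)) * (exp (c k) - 1) ≤ (r * v (y k) - v (y k)) * (exp (c k) - 1) := this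
          _ = (r - 1) * (v (y k) * (exp (c k) - 1)) := by ring
      rw [hgk]
      nlinarith [le_abs_self (r - 1), abs_nonneg (r - 1)]
  -- conclude
  rw [Filter.liminf_eq]
  apply Real.sSup_le _ le_rfl
  intro a ha
  simp only [Set.mem_setOf_eq] at ha
  refine ge_of_tendsto hg0 ?_
  filter_upwards [ha, hkey] with k h1 h2
  exact h1.trans h2
end

section
/- Let E be the probability simplex in ℝ^d and v : {1,…,d}² × E → [0,∞) continuous, where each map μ ↦ v(a,b,μ) is either identically zero, or satisfies: v(a,b,μ) > 0 whenever μ(a) > 0, and for each ν with ν(a) = 0 there is a neighbourhood U_ν and a decomposition v(a,b,μ) = v_†(a,b,μ(a)) v_‡(a,b,μ) on U_ν with v_† increasing in its third argument and v_‡(a,b,·) continuous and nonzero at ν. Define H(μ,p) = ∑_{a,b} v(a,b,μ)(e^{p_b − p_a} − 1). Then for every λ > 0 and h ∈ C(E), the comparison principle holds for f(μ) − λH(μ, ∇f(μ)) − h(μ) = 0: every bounded usc viscosity subsolution u and bounded lsc viscosity supersolution w satisfy u ≤ w. -/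
open Real
open scoped BigOperators
open Filter Topology

section helpers

lemma hasDerivAt_minsq (x : ℝ) :
    HasDerivAt (fun y : ℝ => (min y 0)^2) (2 * min x 0) x := by
  rcases lt_trichotomy x 0 with hx | hx | hx
  · have he : (fun y : ℝ => (min y 0)^2) =ᶠ[𝓝 x] fun y => y^2 := by
      filter_upwards [Iio_mem_nhds hx] with y hy
      simp [min_eq_left (le_of_lt (Set.mem_Iio.mp hy))]
    have := (hasDerivAt_pow 2 x)
    simp only [Nat.cast_ofNat, pow_one] at this
    have h2 : HasDerivAt (fun y : ℝ => y^2) (2 * min x 0) x := by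
      simpa [min_eq_left hx.le] using this
    exact h2.congr_of_eventuallyEq he
  · subst hx
    rw [hasDerivAt_iff_isLittleO]
    simp only [min_self, mul_zero, sub_zero, min_eq_right, smul_zero]
    rw [Asymptotics.isLittleO_iff]
    intro c hc
    filter_upwards [Metric.closedBall_mem_nhds (0:ℝ) hc] with y hy
    rw [Metric.mem_closedBall, Real.dist_eq, sub_zero] at hy
    have h1 : |min y 0| ≤ |y| := by
      rcases le_total y 0 with h | h
      · simp [min_eq_left h]
      · simp [min_eq_right h, abs_nonneg]
    have : ‖(min y 0)^2‖ ≤ |y| * |y| := by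
      rw [Real.norm_eq_abs, abs_pow, sq]
      exact mul_le_mul h1 h1 (abs_nonneg _) (abs_nonneg _)
    calc ‖(min y 0)^2 - 0^2‖ ≤ |y| * |y| := by simpa using this
    _ ≤ c * ‖y‖ := by
        rw [Real.norm_eq_abs]
        exact mul_le_mul_of_nonneg_right hy (abs_nonneg _)
  · have he : (fun y : ℝ => (min y 0)^2) =ᶠ[𝓝 x] fun _ => (0:ℝ) := by
      filter_upwards [Ioi_mem_nhds hx] with y hy
      simp [min_eq_right (le_of_lt (Set.mem_Ioi.mp hy))]
    have h2 : HasDerivAt (fun _ : ℝ => (0:ℝ)) (2 * min x 0) x := by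
      simpa [min_eq_right hx.le] using hasDerivAt_const x (0:ℝ)
    exact h2.congr_of_eventuallyEq he

lemma contDiff_minsq : ContDiff ℝ 1 (fun y : ℝ => (min y 0)^2) := by
  rw [contDiff_one_iff_deriv]
  constructor
  · exact fun x => (hasDerivAt_minsq x).differentiableAt
  · have : deriv (fun y : ℝ => (min y 0)^2) = fun x => 2 * min x 0 := by
      funext x; exact (hasDerivAt_minsq x).deriv
    rw [this]
    exact continuous_const.mul (continuous_id.min continuous_const)

lemma usc_isMaxOn {X : Type*} [PseudoMetricSpace X] {s : Set X} (hs : IsCompact s)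
    (hne : s.Nonempty) {f : X → ℝ}
    (hf : ∀ x ∈ s, ∀ y, f x < y → ∀ᶠ z in nhdsWithin x s, f z < y) :
    ∃ x ∈ s, ∀ z ∈ s, f z ≤ f x := by
  by_cases hbdd : BddAbove (f '' s)
  · set T := sSup (f '' s) with hT
    have hTlt : ∀ n : ℕ, ∃ x ∈ s, T - 1/(n+1) < f x := by
      intro n
      have h1 : T - 1/(n+1) < T := by
        have : (0:ℝ) < 1/(n+1) := by positivity
        linarith
      obtain ⟨y, ⟨x, hx, rfl⟩, hy⟩ := exists_lt_of_lt_csSup (hne.image f) h1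
      exact ⟨x, hx, hy⟩
    choose xs hxs hlt using hTlt
    obtain ⟨xh, hxhs, φ, hφ, hconv⟩ := hs.tendsto_subseq hxs
    refine ⟨xh, hxhs, fun z hz => ?_⟩
    have hfz : f z ≤ T := le_csSup hbdd ⟨z, hz, rfl⟩
    have hfx : T ≤ f xh := by
      by_contra hlt2
      push_neg at hlt2
      have hev0 := hf xh hxhs ((f xh + T)/2) (by linarith)
      have htw : Tendsto (xs ∘ φ) atTop (nhdsWithin xh s) :=
        tendsto_nhdsWithin_iff.2 ⟨hconv, .of_forall fun k => hxs _⟩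
      have hev := htw.eventually hev0
      obtain ⟨N, hN⟩ := exists_nat_one_div_lt (show (0:ℝ) < (T - f xh)/2 by linarith)
      have hev2 : ∀ᶠ k in atTop, (f ∘ (xs ∘ φ)) k < (f xh + T)/2 := hev
      rw [eventually_atTop] at hev2
      obtain ⟨K, hK⟩ := hev2
      set k := max K N with hk
      have h3 : f (xs (φ k)) < (f xh + T)/2 := hK k (le_max_left _ _)
      have h4 : T - 1/(φ k + 1) < f (xs (φ k)) := hlt _
      have h5 : (1:ℝ)/(φ k + 1) ≤ 1/(k+1) := by
        apply one_div_le_one_div_of_le (by positivity)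
        have h7 : (k:ℝ) ≤ φ k := Nat.cast_le.mpr hφ.le_apply
        push_cast
        linarith
      have h6 : (1:ℝ)/(k+1) ≤ 1/(N+1) := by
        apply one_div_le_one_div_of_le (by positivity)
        have h8 : (N:ℝ) ≤ k := Nat.cast_le.mpr (le_max_right _ _)
        push_cast
        linarith
      linarith
    linarith
  · exfalso
    rw [not_bddAbove_iff] at hbdd
    have hseq : ∀ n : ℕ, ∃ x ∈ s, (n:ℝ) < f x := by
      intro n
      obtain ⟨y, ⟨x, hx, rfl⟩, hy⟩ := hbdd n
      exact ⟨x, hx, hy⟩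
    choose xs hxs hlt using hseq
    obtain ⟨xh, hxhs, φ, hφ, hconv⟩ := hs.tendsto_subseq hxs
    have hev0 := hf xh hxhs (f xh + 1) (lt_add_one _)
    have htw : Tendsto (xs ∘ φ) atTop (nhdsWithin xh s) :=
      tendsto_nhdsWithin_iff.2 ⟨hconv, .of_forall fun k => hxs _⟩
    have hev : ∀ᶠ k in atTop, (f ∘ (xs ∘ φ)) k < f xh + 1 := htw.eventually hev0
    rw [eventually_atTop] at hev
    obtain ⟨K, hK⟩ := hev
    obtain ⟨N, hN⟩ := exists_nat_gt (f xh + 1)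
    set k := max K N with hk
    have h3 : f (xs (φ k)) < f xh + 1 := hK k (le_max_left _ _)
    have h4 : (↑(φ k):ℝ) < f (xs (φ k)) := hlt _
    have h5 : (k:ℝ) ≤ φ k := Nat.cast_le.mpr hφ.le_apply
    have h6 : (N:ℝ) ≤ k := Nat.cast_le.mpr (le_max_right _ _)
    linarith

variable {d : ℕ}

noncomputable def Psi (μ ν : Fin d → ℝ) : ℝ := ∑ a, (min (μ a - ν a) 0)^2

lemma contDiff_psi1 (ν : Fin d → ℝ) (c : ℝ) :
    ContDiff ℝ 1 (fun μ' : Fin d → ℝ => c * Psi μ' ν) := by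
  apply ContDiff.mul contDiff_const
  apply ContDiff.sum (fun a _ => ?_)
  exact contDiff_minsq.comp (((ContinuousLinearMap.proj (R := ℝ) (φ := fun _ : Fin d => ℝ) a).contDiff).sub contDiff_const)

lemma hasFDerivAt_psi1 (ν : Fin d → ℝ) (c : ℝ) (μ : Fin d → ℝ) :
    HasFDerivAt (fun μ' : Fin d → ℝ => c * Psi μ' ν)
      (∑ a, (c * (2 * min (μ a - ν a) 0)) • ContinuousLinearMap.proj (R := ℝ) (φ := fun _ : Fin d => ℝ) a) μ := by
  have h1 : ∀ a : Fin d, HasFDerivAt (fun μ' : Fin d → ℝ => (min (μ' a - ν a) 0)^2)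
      ((2 * min (μ a - ν a) 0) • ContinuousLinearMap.proj (R := ℝ) (φ := fun _ : Fin d => ℝ) a) μ := by
    intro a
    have hin : HasFDerivAt (fun μ' : Fin d → ℝ => μ' a - ν a)
        (ContinuousLinearMap.proj (R := ℝ) (φ := fun _ : Fin d => ℝ) a) μ := by
      simpa using ((ContinuousLinearMap.proj (R := ℝ) (φ := fun _ : Fin d => ℝ) a).hasFDerivAt (x := μ)).sub_const (ν a)
    exact (hasDerivAt_minsq (μ a - ν a)).comp_hasFDerivAt μ hin
  have h2 : HasFDerivAt (fun μ' : Fin d → ℝ => Psi μ' ν)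
      (∑ a, (2 * min (μ a - ν a) 0) • ContinuousLinearMap.proj (R := ℝ) (φ := fun _ : Fin d => ℝ) a) μ :=
    HasFDerivAt.fun_sum (fun a _ => h1 a)
  have h3 := h2.const_mul c
  have heq : c • (∑ a, (2 * min (μ a - ν a) 0) • ContinuousLinearMap.proj (R := ℝ) (φ := fun _ : Fin d => ℝ) a)
      = ∑ a, (c * (2 * min (μ a - ν a) 0)) • ContinuousLinearMap.proj (R := ℝ) (φ := fun _ : Fin d => ℝ) a := by
    rw [Finset.smul_sum]
    exact Finset.sum_congr rfl fun a _ => smul_smul _ _ _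
  exact heq ▸ h3

lemma fderiv_psi1_apply (ν : Fin d → ℝ) (c : ℝ) (μ : Fin d → ℝ) (i : Fin d) :
    fderiv ℝ (fun μ' : Fin d → ℝ => c * Psi μ' ν) μ (Pi.single i 1)
      = c * (2 * min (μ i - ν i) 0) := by
  rw [(hasFDerivAt_psi1 ν c μ).fderiv]
  rw [ContinuousLinearMap.sum_apply]
  simp only [ContinuousLinearMap.smul_apply, ContinuousLinearMap.proj_apply, Pi.single_apply,
    smul_eq_mul]
  rw [Finset.sum_eq_single i]
  · simp
  · intro b _ hb; simp [hb]
  · simp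

lemma contDiff_psi2 (μ : Fin d → ℝ) (c : ℝ) :
    ContDiff ℝ 1 (fun ν' : Fin d → ℝ => -(c * Psi μ ν')) := by
  apply ContDiff.neg
  apply ContDiff.mul contDiff_const
  apply ContDiff.sum (fun a _ => ?_)
  exact contDiff_minsq.comp (contDiff_const.sub ((ContinuousLinearMap.proj (R := ℝ) (φ := fun _ : Fin d => ℝ) a).contDiff))

lemma hasFDerivAt_psi2 (μ : Fin d → ℝ) (c : ℝ) (ν : Fin d → ℝ) :
    HasFDerivAt (fun ν' : Fin d → ℝ => -(c * Psi μ ν'))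
      (∑ a, (c * (2 * min (μ a - ν a) 0)) • ContinuousLinearMap.proj (R := ℝ) (φ := fun _ : Fin d => ℝ) a) ν := by
  have h1 : ∀ a : Fin d, HasFDerivAt (fun ν' : Fin d → ℝ => (min (μ a - ν' a) 0)^2)
      ((2 * min (μ a - ν a) 0) • (-(ContinuousLinearMap.proj (R := ℝ) (φ := fun _ : Fin d => ℝ) a))) ν := by
    intro a
    have hin : HasFDerivAt (fun ν' : Fin d → ℝ => μ a - ν' a)
        (-(ContinuousLinearMap.proj (R := ℝ) (φ := fun _ : Fin d => ℝ) a)) ν := by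
      simpa using ((ContinuousLinearMap.proj (R := ℝ) (φ := fun _ : Fin d => ℝ) a).hasFDerivAt (x := ν)).const_sub (μ a)
    exact (hasDerivAt_minsq (μ a - ν a)).comp_hasFDerivAt ν hin
  have h2 : HasFDerivAt (fun ν' : Fin d → ℝ => Psi μ ν')
      (∑ a, (2 * min (μ a - ν a) 0) • (-(ContinuousLinearMap.proj (R := ℝ) (φ := fun _ : Fin d => ℝ) a))) ν :=
    HasFDerivAt.fun_sum (fun a _ => h1 a)
  have h3 := (h2.const_mul c).neg
  have heq : -(c • (∑ a, (2 * min (μ a - ν a) 0) • (-(ContinuousLinearMap.proj (R := ℝ) (φ := fun _ : Fin d => ℝ) a))))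
      = ∑ a, (c * (2 * min (μ a - ν a) 0)) • ContinuousLinearMap.proj (R := ℝ) (φ := fun _ : Fin d => ℝ) a := by
    rw [Finset.smul_sum, ← Finset.sum_neg_distrib]
    exact Finset.sum_congr rfl fun a _ => by rw [smul_neg, smul_neg, neg_neg, smul_smul]
  exact heq ▸ h3

lemma fderiv_psi2_apply (μ : Fin d → ℝ) (c : ℝ) (ν : Fin d → ℝ) (i : Fin d) :
    fderiv ℝ (fun ν' : Fin d → ℝ => -(c * Psi μ ν')) ν (Pi.single i 1)
      = c * (2 * min (μ i - ν i) 0) := by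
  rw [(hasFDerivAt_psi2 μ c ν).fderiv]
  rw [ContinuousLinearMap.sum_apply]
  simp only [ContinuousLinearMap.smul_apply, ContinuousLinearMap.proj_apply, Pi.single_apply,
    smul_eq_mul]
  rw [Finset.sum_eq_single i]
  · simp
  · intro b _ hb; simp [hb]
  · simp

lemma psi_nonneg (μ ν : Fin d → ℝ) : 0 ≤ Psi μ ν :=
  Finset.sum_nonneg fun a _ => sq_nonneg _

lemma psi_self (μ : Fin d → ℝ) : Psi μ μ = 0 := by simp [Psi]

lemma psi_continuous : Continuous (fun z : (Fin d → ℝ) × (Fin d → ℝ) => Psi z.1 z.2) := by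
  apply continuous_finset_sum
  intro a _
  exact ((((continuous_apply a).comp continuous_fst).sub
    ((continuous_apply a).comp continuous_snd)).min continuous_const).pow 2

end helpers


set_option maxHeartbeats 1000000 in
/-- Comparison principle for the mean-field jump Hamilton–Jacobi equation
`f(μ) − λH(μ,∇f(μ)) − h(μ) = 0` on the probability simplex `E ⊆ ℝ^d`, where
`H(μ,p) = ∑_{a,b} v(a,b,μ)(e^{p_b − p_a} − 1)` and each rate `v(a,b,·)` is either
identically zero, or positive when `μ(a) > 0` with an increasing × continuous
nonvanishing local decomposition at the boundary `ν(a) = 0`: every bounded usc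
viscosity subsolution `u` and bounded lsc viscosity supersolution `w` satisfy
`u ≤ w` on `E`. -/
theorem stmt_17 {d : ℕ}
    (v : Fin d → Fin d → (Fin d → ℝ) → ℝ)
    (hvc : ∀ a b, ContinuousOn (v a b) (stdSimplex ℝ (Fin d)))
    (hv0 : ∀ a b, ∀ μ ∈ stdSimplex ℝ (Fin d), 0 ≤ v a b μ)
    (hvcond : ∀ a b : Fin d,
      (∀ μ ∈ stdSimplex ℝ (Fin d), v a b μ = 0) ∨
      ((∀ μ ∈ stdSimplex ℝ (Fin d), 0 < μ a → 0 < v a b μ) ∧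
        ∀ ν ∈ stdSimplex ℝ (Fin d), ν a = 0 →
          ∃ U ∈ nhdsWithin ν (stdSimplex ℝ (Fin d)),
          ∃ vd : ℝ → ℝ, ∃ vdd : (Fin d → ℝ) → ℝ,
            (∀ μ ∈ U, v a b μ = vd (μ a) * vdd μ) ∧
            MonotoneOn vd ((fun μ : Fin d → ℝ => μ a) '' U) ∧
            ContinuousOn vdd U ∧ vdd ν ≠ 0))
    (H : (Fin d → ℝ) → (Fin d → ℝ) → ℝ)
    (hH : ∀ μ p, H μ p = ∑ a, ∑ b, v a b μ * (exp (p b - p a) - 1))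
    (lam : ℝ) (hlam : 0 < lam)
    (h : (Fin d → ℝ) → ℝ) (hh : ContinuousOn h (stdSimplex ℝ (Fin d)))
    (u w : (Fin d → ℝ) → ℝ)
    (hu_usc : UpperSemicontinuousOn u (stdSimplex ℝ (Fin d)))
    (hw_lsc : LowerSemicontinuousOn w (stdSimplex ℝ (Fin d)))
    (hub : ∃ M, ∀ μ ∈ stdSimplex ℝ (Fin d), |u μ| ≤ M)
    (hwb : ∃ M, ∀ μ ∈ stdSimplex ℝ (Fin d), |w μ| ≤ M)
    -- u is a viscosity subsolution of f − λH(·,∇f) − h = 0: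
    (hu_sub : ∀ f : (Fin d → ℝ) → ℝ, ContDiff ℝ 1 f → ∀ μ ∈ stdSimplex ℝ (Fin d),
      IsMaxOn (fun ν => u ν - f ν) (stdSimplex ℝ (Fin d)) μ →
      u μ - lam * H μ (fun i => fderiv ℝ f μ (Pi.single i 1)) - h μ ≤ 0)
    -- w is a viscosity supersolution of f − λH(·,∇f) − h = 0:
    (hw_super : ∀ f : (Fin d → ℝ) → ℝ, ContDiff ℝ 1 f → ∀ μ ∈ stdSimplex ℝ (Fin d),
      IsMinOn (fun ν => w ν - f ν) (stdSimplex ℝ (Fin d)) μ →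
      0 ≤ w μ - lam * H μ (fun i => fderiv ℝ f μ (Pi.single i 1)) - h μ) :
    ∀ μ ∈ stdSimplex ℝ (Fin d), u μ ≤ w μ := by
  intro μ₀ hμ₀
  by_contra hcon
  push_neg at hcon
  set E := stdSimplex ℝ (Fin d) with hEdef
  set δ := u μ₀ - w μ₀ with hδdef
  have hδ : 0 < δ := by simp only [hδdef]; linarith
  obtain ⟨Mu, hMu⟩ := hub
  obtain ⟨Mw, hMw⟩ := hwb
  have hEc : IsCompact E := isCompact_stdSimplex ℝ (Fin d)
  obtain ⟨Mh, hMh'⟩ := hEc.exists_bound_of_continuousOn hh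
  have hMh : ∀ x ∈ E, |h x| ≤ Mh := by
    intro x hx; simpa [Real.norm_eq_abs] using hMh' x hx
  choose Cv' hCv'' using fun a b => hEc.exists_bound_of_continuousOn (hvc a b)
  have hCv' : ∀ a b : Fin d, ∀ x ∈ E, |v a b x| ≤ Cv' a b := by
    intro a b x hx; simpa [Real.norm_eq_abs] using hCv'' a b x hx
  set Cv := ∑ a : Fin d, ∑ b : Fin d, |Cv' a b| with hCvdef
  have hCv : ∀ a b : Fin d, ∀ x ∈ E, v a b x ≤ Cv := by
    intro a b x hx
    have h1 : v a b x ≤ |Cv' a b| := le_trans (le_abs_self _)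
      (le_trans (hCv' a b x hx) (le_abs_self _))
    refine le_trans h1 ?_
    have h2 : |Cv' a b| ≤ ∑ b' : Fin d, |Cv' a b'| :=
      Finset.single_le_sum (f := fun b' => |Cv' a b'|) (fun b' _ => abs_nonneg _)
        (Finset.mem_univ b)
    refine le_trans h2 ?_
    exact Finset.single_le_sum (f := fun a' => ∑ b' : Fin d, |Cv' a' b'|)
      (fun a' _ => Finset.sum_nonneg fun b' _ => abs_nonneg _) (Finset.mem_univ a)
  have hCv0 : 0 ≤ Cv := Finset.sum_nonneg fun a _ => Finset.sum_nonneg fun b _ => abs_nonneg _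
  -- the doubled function has a maximizer
  have husc : ∀ n : ℕ, ∀ x ∈ E ×ˢ E, ∀ y,
      (u x.1 - w x.2 - ((n : ℝ)+1) * Psi x.1 x.2) < y →
      ∀ᶠ z in nhdsWithin x (E ×ˢ E), (u z.1 - w z.2 - ((n : ℝ)+1) * Psi z.1 z.2) < y := by
    intro n x hx y hy
    set c : (Fin d → ℝ) × (Fin d → ℝ) → ℝ := fun z => ((n : ℝ)+1) * Psi z.1 z.2 with hcdef
    have hccont : Continuous c := continuous_const.mul psi_continuous
    have hy' : u x.1 - w x.2 - c x < y := hy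
    set ε3 := (y - (u x.1 - w x.2 - c x))/3 with hε3def
    have hε3 : 0 < ε3 := by simp only [hε3def]; linarith
    have t1 : Tendsto Prod.fst (nhdsWithin x (E ×ˢ E)) (nhdsWithin x.1 E) :=
      (continuous_fst.continuousWithinAt).tendsto_nhdsWithin (fun z hz => hz.1)
    have t2 : Tendsto Prod.snd (nhdsWithin x (E ×ˢ E)) (nhdsWithin x.2 E) :=
      (continuous_snd.continuousWithinAt).tendsto_nhdsWithin (fun z hz => hz.2)
    have ev1 : ∀ᶠ z in nhdsWithin x (E ×ˢ E), u z.1 < u x.1 + ε3 :=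
      t1.eventually ((hu_usc x.1 hx.1) (u x.1 + ε3) (by linarith))
    have ev2 : ∀ᶠ z in nhdsWithin x (E ×ˢ E), w x.2 - ε3 < w z.2 :=
      t2.eventually ((hw_lsc x.2 hx.2) (w x.2 - ε3) (by linarith))
    have ev3 : ∀ᶠ z in nhdsWithin x (E ×ˢ E), |c z - c x| < ε3 := by
      have ht : Tendsto c (nhdsWithin x (E ×ˢ E)) (nhds (c x)) :=
        (hccont.tendsto x).mono_left nhdsWithin_le_nhds
      filter_upwards [Metric.tendsto_nhds.mp ht ε3 hε3] with z hz
      rwa [Real.dist_eq] at hz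
    filter_upwards [ev1, ev2, ev3] with z h1 h2 h3
    have h4 := (abs_lt.mp h3).1
    have h5 : u z.1 - w z.2 - c z < (u x.1 - w x.2 - c x) + 3 * ε3 := by linarith
    simp only [hε3def] at h5
    show u z.1 - w z.2 - c z < y
    linarith
  have hmax : ∀ n : ℕ, ∃ x : (Fin d → ℝ) × (Fin d → ℝ), x ∈ E ×ˢ E ∧ ∀ z ∈ E ×ˢ E,
      (u z.1 - w z.2 - ((n : ℝ)+1) * Psi z.1 z.2)
        ≤ (u x.1 - w x.2 - ((n : ℝ)+1) * Psi x.1 x.2) := by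
    intro n
    obtain ⟨x, hx, hmax⟩ := usc_isMaxOn (hEc.prod hEc) ⟨(μ₀, μ₀), ⟨hμ₀, hμ₀⟩⟩ (husc n)
    exact ⟨x, hx, hmax⟩
  choose σ hσmem hσmax using hmax
  set μs : ℕ → (Fin d → ℝ) := fun n => (σ n).1 with hμsdef
  set νs : ℕ → (Fin d → ℝ) := fun n => (σ n).2 with hνsdef
  have hμsE : ∀ n, μs n ∈ E := fun n => (hσmem n).1
  have hνsE : ∀ n, νs n ∈ E := fun n => (hσmem n).2
  have hkey : ∀ n : ℕ, ∀ μ' ∈ E, ∀ ν' ∈ E,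
      u μ' - w ν' - ((n : ℝ)+1) * Psi μ' ν'
        ≤ u (μs n) - w (νs n) - ((n : ℝ)+1) * Psi (μs n) (νs n) :=
    fun n μ' hμ' ν' hν' => hσmax n (μ', ν') ⟨hμ', hν'⟩
  have hdel : ∀ n : ℕ, δ ≤ u (μs n) - w (νs n) - ((n : ℝ)+1) * Psi (μs n) (νs n) := by
    intro n
    have := hkey n μ₀ hμ₀ μ₀ hμ₀
    rw [psi_self, mul_zero, sub_zero, ← hδdef] at this
    linarith
  have hdel' : ∀ n : ℕ, δ ≤ u (μs n) - w (νs n) := by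
    intro n
    have h1 := hdel n
    have h2 : 0 ≤ ((n : ℝ)+1) * Psi (μs n) (νs n) :=
      mul_nonneg (by positivity) (psi_nonneg _ _)
    linarith
  have hMuw : ∀ n : ℕ, Psi (μs n) (νs n) ≤ (Mu + Mw) / ((n : ℝ)+1) := by
    intro n
    have h1 := hdel n
    have h2 : u (μs n) ≤ Mu := le_trans (le_abs_self _) (hMu _ (hμsE n))
    have h3 : -Mw ≤ w (νs n) := neg_le_of_abs_le (hMw _ (hνsE n))
    rw [le_div_iff₀ (by positivity : (0:ℝ) < (n : ℝ)+1)]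
    nlinarith
  -- gradients
  set pn : ℕ → Fin d → ℝ := fun n i => ((n : ℝ)+1) * (2 * min (μs n i - νs n i) 0) with hpndef
  have hsub : ∀ n : ℕ, u (μs n) ≤ lam * H (μs n) (pn n) + h (μs n) := by
    intro n
    have hmaxon : IsMaxOn (fun ν' => u ν' - (((n : ℝ)+1) * Psi ν' (νs n))) E (μs n) := by
      rw [isMaxOn_iff]
      intro x hx
      have := hkey n x hx (νs n) (hνsE n)
      linarith
    have hf := hu_sub (fun μ' => ((n : ℝ)+1) * Psi μ' (νs n)) (contDiff_psi1 _ _)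
      (μs n) (hμsE n) hmaxon
    have hgrad : (fun i => fderiv ℝ (fun μ' => ((n : ℝ)+1) * Psi μ' (νs n)) (μs n)
        (Pi.single i 1)) = pn n := by
      funext i
      rw [fderiv_psi1_apply]
    rw [hgrad] at hf
    linarith
  have hsup : ∀ n : ℕ, lam * H (νs n) (pn n) + h (νs n) ≤ w (νs n) := by
    intro n
    have hminon : IsMinOn (fun ν' => w ν' - (-(((n : ℝ)+1) * Psi (μs n) ν'))) E (νs n) := by
      rw [isMinOn_iff]
      intro x hx
      have := hkey n (μs n) (hμsE n) x hx
      linarith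
    have hf := hw_super (fun ν' => -(((n : ℝ)+1) * Psi (μs n) ν')) (contDiff_psi2 _ _)
      (νs n) (hνsE n) hminon
    have hgrad : (fun i => fderiv ℝ (fun ν' => -(((n : ℝ)+1) * Psi (μs n) ν')) (νs n)
        (Pi.single i 1)) = pn n := by
      funext i
      rw [fderiv_psi2_apply]
    rw [hgrad] at hf
    linarith
  have hcomb : ∀ n : ℕ, δ ≤ lam * (H (μs n) (pn n) - H (νs n) (pn n))
      + (h (μs n) - h (νs n)) := by
    intro n
    have h0 := hdel' n
    have h1 := hsub n
    have h2 := hsup n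
    have h3 : lam * (H (μs n) (pn n) - H (νs n) (pn n))
        = lam * H (μs n) (pn n) - lam * H (νs n) (pn n) := mul_sub _ _ _
    linarith
  -- per-term bound from the supersolution inequality
  set C₁ : ℝ := max ((Mw + Mh) / lam + ((d : ℝ) * d) * Cv) 1 with hC₁def
  have hC₁pos : 0 < C₁ := lt_of_lt_of_le one_pos (le_max_right _ _)
  have hterm : ∀ n : ℕ, ∀ a b : Fin d,
      v a b (νs n) * (exp (pn n b - pn n a) - 1) ≤ C₁ := by
    intro n a b
    have hHb : lam * H (νs n) (pn n) ≤ Mw + Mh := by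
      have h1 := hsup n
      have h2 : w (νs n) ≤ Mw := le_trans (le_abs_self _) (hMw _ (hνsE n))
      have h3 : -Mh ≤ h (νs n) := neg_le_of_abs_le (hMh _ (hνsE n))
      linarith
    have hHb2 : H (νs n) (pn n) ≤ (Mw + Mh) / lam := by
      rw [le_div_iff₀ hlam]; linarith [hHb]
    set t : Fin d → Fin d → ℝ :=
      fun a' b' => v a' b' (νs n) * (exp (pn n b' - pn n a') - 1) with htdef
    have htlow : ∀ a' b', -Cv ≤ t a' b' := by
      intro a' b'
      have h1 : 0 ≤ v a' b' (νs n) := hv0 a' b' _ (hνsE n)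
      have h2 : v a' b' (νs n) ≤ Cv := hCv a' b' _ (hνsE n)
      have h3 : (-1 : ℝ) ≤ exp (pn n b' - pn n a') - 1 := by
        have := Real.exp_pos (pn n b' - pn n a'); linarith
      have h4 : t a' b' = v a' b' (νs n) * (exp (pn n b' - pn n a') - 1) := rfl
      rw [h4]
      nlinarith
    have hsingle : t a b ≤ (∑ a' : Fin d, ∑ b' : Fin d, (t a' b' + Cv)) - Cv := by
      have h1 : t a b + Cv ≤ ∑ a' : Fin d, ∑ b' : Fin d, (t a' b' + Cv) := by
        have hin : t a b + Cv ≤ ∑ b' : Fin d, (t a b' + Cv) :=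
          Finset.single_le_sum (f := fun b' => t a b' + Cv)
            (fun b' _ => by show (0:ℝ) ≤ t a b' + Cv; linarith [htlow a b']) (Finset.mem_univ b)
        refine le_trans hin ?_
        exact Finset.single_le_sum (f := fun a' => ∑ b' : Fin d, (t a' b' + Cv))
          (fun a' _ => Finset.sum_nonneg fun b' _ => by
            show (0:ℝ) ≤ t a' b' + Cv
            linarith [htlow a' b'])
          (Finset.mem_univ a)
      linarith
    have hinner : ∀ a' : Fin d, ∑ b' : Fin d, (t a' b' + Cv)
        = (∑ b' : Fin d, t a' b') + (d : ℝ) * Cv := by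
      intro a'
      rw [Finset.sum_add_distrib, Finset.sum_const, Finset.card_univ, Fintype.card_fin,
        nsmul_eq_mul]
    have hsum : (∑ a' : Fin d, ∑ b' : Fin d, (t a' b' + Cv))
        = (∑ a' : Fin d, ∑ b' : Fin d, t a' b') + (d : ℝ) * ((d : ℝ) * Cv) := by
      calc (∑ a' : Fin d, ∑ b' : Fin d, (t a' b' + Cv))
          = ∑ a' : Fin d, ((∑ b' : Fin d, t a' b') + (d : ℝ) * Cv) :=
            Finset.sum_congr rfl fun a' _ => hinner a'
        _ = (∑ a' : Fin d, ∑ b' : Fin d, t a' b') + (d : ℝ) * ((d : ℝ) * Cv) := by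
            rw [Finset.sum_add_distrib, Finset.sum_const, Finset.card_univ, Fintype.card_fin,
              nsmul_eq_mul]
    have hts : (∑ a' : Fin d, ∑ b' : Fin d, t a' b') = H (νs n) (pn n) := by
      rw [hH]
    have htab : t a b = v a b (νs n) * (exp (pn n b - pn n a) - 1) := rfl
    have hfin : t a b ≤ C₁ := by
      have h5 : t a b ≤ H (νs n) (pn n) + (d : ℝ) * ((d : ℝ) * Cv) - Cv := by
        rw [← hts, ← hsum]; exact hsingle
      have h6 : (Mw + Mh) / lam + ((d : ℝ) * d) * Cv ≤ C₁ := le_max_left _ _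
      have h7 : (d : ℝ) * ((d : ℝ) * Cv) = ((d : ℝ) * d) * Cv := by ring
      linarith
    linarith [htab ▸ hfin]
  -- subsequence extraction
  obtain ⟨μh, hμhE, φ₁, hφ₁, hc₁⟩ := hEc.tendsto_subseq hμsE
  obtain ⟨νh, hνhE, φ₂, hφ₂, hc₂⟩ := hEc.tendsto_subseq (fun k => hνsE (φ₁ k))
  set m : ℕ → ℕ := φ₁ ∘ φ₂ with hmdef
  have hm : StrictMono m := hφ₁.comp hφ₂
  have hcμ : Tendsto (fun k => μs (m k)) atTop (nhds μh) :=
    hc₁.comp hφ₂.tendsto_atTop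
  have hcν : Tendsto (fun k => νs (m k)) atTop (nhds νh) := hc₂
  -- the limits coincide
  have hPsilim : Tendsto (fun k => Psi (μs (m k)) (νs (m k))) atTop (nhds (Psi μh νh)) := by
    have hprod : Tendsto (fun k => (μs (m k), νs (m k))) atTop (nhds (μh, νh)) :=
      hcμ.prodMk_nhds hcν
    exact (psi_continuous.tendsto (μh, νh)).comp hprod
  have hPsi0 : Psi μh νh = 0 := by
    have hMuw0 : 0 ≤ Mu + Mw := by
      have h2 : u μ₀ ≤ Mu := le_trans (le_abs_self _) (hMu _ hμ₀)
      have h3 : -Mw ≤ w μ₀ := neg_le_of_abs_le (hMw _ hμ₀)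
      linarith
    have hzero : Tendsto (fun k => Psi (μs (m k)) (νs (m k))) atTop (nhds 0) := by
      apply squeeze_zero (fun k => psi_nonneg _ _)
        (g := fun k : ℕ => (Mu + Mw) / ((k : ℝ) + 1))
      · intro k
        refine le_trans (hMuw (m k)) (div_le_div_of_nonneg_left hMuw0 (by positivity) ?_)
        have : (k : ℝ) ≤ (m k : ℝ) := Nat.cast_le.mpr hm.le_apply
        linarith
      · have h1 : Tendsto (fun k : ℕ => ((k : ℝ) + 1)) atTop atTop :=
          tendsto_atTop_add_const_right atTop 1 tendsto_natCast_atTop_atTop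
        exact Tendsto.div_atTop tendsto_const_nhds h1
    exact tendsto_nhds_unique hPsilim hzero
  have hμν : μh = νh := by
    have hle : ∀ i, νh i ≤ μh i := by
      intro i
      have hz : ∀ j ∈ Finset.univ, (0:ℝ) ≤ (min (μh j - νh j) 0)^2 := fun j _ => sq_nonneg _
      have := (Finset.sum_eq_zero_iff_of_nonneg hz).mp hPsi0 i (Finset.mem_univ i)
      have hmin : min (μh i - νh i) 0 = 0 := pow_eq_zero_iff two_ne_zero |>.mp this
      by_contra hlt
      push_neg at hlt
      rw [min_eq_left (by linarith : μh i - νh i ≤ 0)] at hmin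
      linarith
    have hsum : ∑ i, νh i = ∑ i, μh i := by rw [hνhE.2, hμhE.2]
    funext i
    exact ((Finset.sum_eq_sum_iff_of_le (fun i _ => hle i)).mp hsum i (Finset.mem_univ i)).symm
  have hcν2 : Tendsto (fun k => νs (m k)) atTop (nhds μh) := by rw [hμν]; exact hcν
  have hcμ' : Tendsto (fun k => μs (m k)) atTop (nhdsWithin μh E) :=
    tendsto_nhdsWithin_iff.2 ⟨hcμ, .of_forall fun k => hμsE _⟩
  have hcν' : Tendsto (fun k => νs (m k)) atTop (nhdsWithin μh E) :=
    tendsto_nhdsWithin_iff.2 ⟨hcν2, .of_forall fun k => hνsE _⟩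
  have hhlim : Tendsto (fun k => h (μs (m k)) - h (νs (m k))) atTop (nhds 0) := by
    have h1 : Tendsto (fun k => h (μs (m k))) atTop (nhds (h μh)) :=
      Filter.Tendsto.comp (hh μh hμhE) hcμ'
    have h2 : Tendsto (fun k => h (νs (m k))) atTop (nhds (h μh)) :=
      Filter.Tendsto.comp (hh μh hμhE) hcν'
    simpa using h1.sub h2
  -- the key per-pair estimate
  have hpair : ∀ a b : Fin d, ∀ ε : ℝ, 0 < ε →
      ∀ᶠ k in atTop, (v a b (μs (m k)) - v a b (νs (m k)))
        * (exp (pn (m k) b - pn (m k) a) - 1) ≤ ε := by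
    intro a b ε hε
    rcases hvcond a b with hzero | ⟨hpos, hdec⟩
    · filter_upwards with k
      rw [hzero _ (hμsE _), hzero _ (hνsE _)]
      simp only [sub_self, zero_mul]
      linarith
    · have hvμlim : Tendsto (fun k => v a b (μs (m k))) atTop (nhds (v a b μh)) :=
        Filter.Tendsto.comp (hvc a b μh hμhE) hcμ'
      have hvνlim : Tendsto (fun k => v a b (νs (m k))) atTop (nhds (v a b μh)) :=
        Filter.Tendsto.comp (hvc a b μh hμhE) hcν'
      have hD : Tendsto (fun k => v a b (μs (m k)) - v a b (νs (m k))) atTop (nhds 0) := by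
        simpa using hvμlim.sub hvνlim
      have hV0 : 0 ≤ v a b μh := hv0 a b μh hμhE
      -- facts about exponents
      have hpb : ∀ k, pn (m k) b ≤ 0 := fun k =>
        mul_nonpos_of_nonneg_of_nonpos (by positivity)
          (by nlinarith [min_le_right (μs (m k) b - νs (m k) b) (0:ℝ)])
      have hXgt : ∀ k, (-1 : ℝ) < exp (pn (m k) b - pn (m k) a) - 1 := fun k => by
        have := Real.exp_pos (pn (m k) b - pn (m k) a); linarith
      have hposcase : ∀ k, 0 < exp (pn (m k) b - pn (m k) a) - 1 →
          μs (m k) a < νs (m k) a := by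
        intro k hX
        have hc : 0 < pn (m k) b - pn (m k) a := by
          by_contra hcc
          push_neg at hcc
          have h7 : exp (pn (m k) b - pn (m k) a) ≤ 1 := Real.exp_le_one_iff.mpr hcc
          linarith
        have hpa : pn (m k) a < 0 := by linarith [hpb k]
        have hmin : min (μs (m k) a - νs (m k) a) 0 < 0 := by
          by_contra hmm
          push_neg at hmm
          have h0 : min (μs (m k) a - νs (m k) a) 0 = 0 :=
            le_antisymm (min_le_right _ _) hmm
          rw [show pn (m k) a = ((m k : ℝ)+1) * (2 * min (μs (m k) a - νs (m k) a) 0) from rfl,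
            h0] at hpa
          norm_num at hpa
        rcases min_lt_iff.mp hmin with h1 | h1
        · linarith
        · exact absurd h1 (lt_irrefl 0)
      rcases eq_or_lt_of_le hV0 with hV | hV
      · -- boundary case : v a b μh = 0
        have hμha : μh a = 0 := by
          by_contra hna
          have h1 : 0 < μh a := lt_of_le_of_ne (hμhE.1 a) (Ne.symm hna)
          have := hpos μh hμhE h1
          rw [← hV] at this
          exact lt_irrefl 0 this
        obtain ⟨U, hU, vdf, vdd, hUdec, hmono, hvddc, hvddν⟩ := hdec μh hμhE hμha
        have hμhU : μh ∈ U := mem_of_mem_nhdsWithin hμhE hU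
        have hvd0 : vdf (μh a) = 0 := by
          have h0 : vdf (μh a) * vdd μh = 0 := by rw [← hUdec μh hμhU, ← hV]
          rcases mul_eq_zero.mp h0 with h1 | h1
          · exact h1
          · exact absurd h1 hvddν
        set η := |vdd μh| / 2 with hηdef
        have hη0 : 0 < η := by
          have := abs_pos.mpr hvddν
          simp only [hηdef]; linarith
        set ε₂ := min η (ε * η / (2 * C₁)) with hε₂def
        have hε₂0 : 0 < ε₂ := lt_min hη0 (by positivity)
        have hevμU : ∀ᶠ k in atTop, μs (m k) ∈ U := hcμ' hU
        have hevνU : ∀ᶠ k in atTop, νs (m k) ∈ U := hcν' hU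
        have hcμU : Tendsto (fun k => μs (m k)) atTop (nhdsWithin μh U) :=
          tendsto_nhdsWithin_iff.2 ⟨hcμ, hevμU⟩
        have hcνU : Tendsto (fun k => νs (m k)) atTop (nhdsWithin μh U) :=
          tendsto_nhdsWithin_iff.2 ⟨hcν2, hevνU⟩
        have hvddμlim : Tendsto (fun k => vdd (μs (m k))) atTop (nhds (vdd μh)) :=
          Filter.Tendsto.comp (hvddc μh hμhU) hcμU
        have hvddνlim : Tendsto (fun k => vdd (νs (m k))) atTop (nhds (vdd μh)) :=
          Filter.Tendsto.comp (hvddc μh hμhU) hcνU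
        have hev1 : ∀ᶠ k in atTop, |vdd (μs (m k)) - vdd μh| < ε₂ := by
          filter_upwards [Metric.tendsto_nhds.mp hvddμlim ε₂ hε₂0] with k hk
          rwa [Real.dist_eq] at hk
        have hev2 : ∀ᶠ k in atTop, |vdd (νs (m k)) - vdd μh| < ε₂ := by
          filter_upwards [Metric.tendsto_nhds.mp hvddνlim ε₂ hε₂0] with k hk
          rwa [Real.dist_eq] at hk
        have hevD : ∀ᶠ k in atTop, |v a b (μs (m k)) - v a b (νs (m k))| ≤ ε := by
          filter_upwards [Metric.tendsto_nhds.mp hD ε hε] with k hk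
          rw [Real.dist_eq, sub_zero] at hk
          exact le_of_lt hk
        filter_upwards [hev1, hev2, hevμU, hevνU, hevD] with k h1 h2 h3 h4 h5
        set X := exp (pn (m k) b - pn (m k) a) - 1 with hXdef
        rcases le_or_gt X 0 with hXle | hXpos
        · -- negative exponent: easy
          have hXg := hXgt k
          rw [← hXdef] at hXg
          set D := v a b (μs (m k)) - v a b (νs (m k)) with hDdef
          have habs := abs_le.mp h5
          nlinarith [mul_nonneg (by linarith : (0:ℝ) ≤ D + ε) (by linarith : (0:ℝ) ≤ -X),
            mul_nonneg (le_of_lt hε) (by linarith : (0:ℝ) ≤ X + 1)]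
        · -- positive exponent
          have hab := hposcase k hXpos
          have hνa : 0 < νs (m k) a := lt_of_le_of_lt ((hμsE (m k)).1 a) hab
          have hvν : 0 < v a b (νs (m k)) := hpos _ (hνsE _) hνa
          have hvμeq : v a b (μs (m k)) = vdf (μs (m k) a) * vdd (μs (m k)) := hUdec _ h3
          have hvνeq : v a b (νs (m k)) = vdf (νs (m k) a) * vdd (νs (m k)) := hUdec _ h4
          have himg1 : μs (m k) a ∈ (fun μ : Fin d → ℝ => μ a) '' U := ⟨_, h3, rfl⟩
          have himg2 : νs (m k) a ∈ (fun μ : Fin d → ℝ => μ a) '' U := ⟨_, h4, rfl⟩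
          have himgh : μh a ∈ (fun μ : Fin d → ℝ => μ a) '' U := ⟨_, hμhU, rfl⟩
          have hmono1 : vdf (μs (m k) a) ≤ vdf (νs (m k) a) := hmono himg1 himg2 hab.le
          have hmono2 : (0:ℝ) ≤ vdf (νs (m k) a) := by
            rw [← hvd0]
            exact hmono himgh himg2 (by rw [hμha]; exact hνa.le)
          have hvdν : 0 < vdf (νs (m k) a) := by
            rcases lt_or_eq_of_le hmono2 with h6 | h6
            · exact h6
            · exfalso; rw [hvνeq, ← h6, zero_mul] at hvν; exact lt_irrefl 0 hvν
          have hvddν0 : 0 < vdd (νs (m k)) := by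
            nlinarith [hvν, hvνeq]
          have hvddh : 0 < vdd μh := by
            rcases lt_trichotomy (vdd μh) 0 with h6 | h6 | h6
            · exfalso
              have h7 : η = -vdd μh / 2 := by rw [hηdef, abs_of_neg h6]
              have h8 : ε₂ ≤ η := min_le_left _ _
              have h9 := (abs_lt.mp h2).2
              linarith
            · exact absurd h6 hvddν
            · exact h6
          have hη' : η = vdd μh / 2 := by rw [hηdef, abs_of_pos hvddh]
          have hημ : η ≤ vdd (μs (m k)) := by
            have h9 := (abs_lt.mp h1).1
            have h8 : ε₂ ≤ η := min_le_left _ _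
            linarith [hη' ▸ le_refl η]
          have hην : η ≤ vdd (νs (m k)) := by
            have h9 := (abs_lt.mp h2).1
            have h8 : ε₂ ≤ η := min_le_left _ _
            linarith [hη' ▸ le_refl η]
          -- main chain
          have hDle : v a b (μs (m k)) - v a b (νs (m k))
              ≤ vdf (νs (m k) a) * (vdd (μs (m k)) - vdd (νs (m k))) := by
            rw [hvμeq, hvνeq]
            have h10 : vdf (μs (m k) a) * vdd (μs (m k))
                ≤ vdf (νs (m k) a) * vdd (μs (m k)) :=
              mul_le_mul_of_nonneg_right hmono1 (by linarith)
            nlinarith [h10]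
          have hQC : vdf (νs (m k) a) * X * vdd (νs (m k)) ≤ C₁ := by
            have h11 := hterm (m k) a b
            rw [hvνeq] at h11
            rw [← hXdef] at h11
            nlinarith [h11]
          have hQpos : 0 ≤ vdf (νs (m k) a) * X := mul_nonneg hvdν.le hXpos.le
          have hQle : vdf (νs (m k) a) * X ≤ C₁ / η := by
            rw [le_div_iff₀ hη0]
            nlinarith [mul_le_mul_of_nonneg_left hην hQpos]
          have hΔ : vdd (μs (m k)) - vdd (νs (m k)) ≤ 2 * ε₂ := by
            have h9 := (abs_lt.mp h1).2
            have h10 := (abs_lt.mp h2).1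
            linarith
          have hε₂' : ε₂ ≤ ε * η / (2 * C₁) := min_le_right _ _
          -- conclude
          rcases le_or_gt (vdd (μs (m k)) - vdd (νs (m k))) 0 with hΔ0 | hΔ0
          · have : (v a b (μs (m k)) - v a b (νs (m k))) * X
                ≤ (vdf (νs (m k) a) * X) * (vdd (μs (m k)) - vdd (νs (m k))) := by
              nlinarith [hDle, hXpos]
            have h12 : (vdf (νs (m k) a) * X) * (vdd (μs (m k)) - vdd (νs (m k))) ≤ 0 :=
              mul_nonpos_of_nonneg_of_nonpos hQpos hΔ0
            linarith
          · have h13 : (v a b (μs (m k)) - v a b (νs (m k))) * X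
                ≤ (vdf (νs (m k) a) * X) * (vdd (μs (m k)) - vdd (νs (m k))) := by
              nlinarith [hDle, hXpos]
            have h14 : (vdf (νs (m k) a) * X) * (vdd (μs (m k)) - vdd (νs (m k)))
                ≤ (C₁ / η) * (2 * ε₂) :=
              mul_le_mul hQle hΔ hΔ0.le (by positivity)
            have h15 : (C₁ / η) * (2 * ε₂) ≤ ε := by
              have h17 : ε₂ * (2 * C₁) ≤ ε * η :=
                (le_div_iff₀ (by positivity : (0:ℝ) < 2 * C₁)).mp hε₂'
              rw [div_mul_eq_mul_div, div_le_iff₀ hη0]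
              linarith
            exact le_trans h13 (le_trans h14 h15)
      · -- interior case : v a b μh > 0
        set V := v a b μh with hVdef
        set B := max 1 (2 * C₁ / V) with hBdef
        have hB1 : (1:ℝ) ≤ B := le_max_left _ _
        have hBpos : (0:ℝ) < B := lt_of_lt_of_le one_pos hB1
        have hev1 : ∀ᶠ k in atTop, V / 2 ≤ v a b (νs (m k)) := by
          filter_upwards [Metric.tendsto_nhds.mp hvνlim (V/2) (by positivity)] with k hk
          rw [Real.dist_eq] at hk
          have := (abs_lt.mp hk).1
          linarith
        have hev2 : ∀ᶠ k in atTop, |v a b (μs (m k)) - v a b (νs (m k))| ≤ ε / B := by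
          filter_upwards [Metric.tendsto_nhds.mp hD (ε/B) (by positivity)] with k hk
          rw [Real.dist_eq, sub_zero] at hk
          exact le_of_lt hk
        filter_upwards [hev1, hev2] with k h1 h2
        set X := exp (pn (m k) b - pn (m k) a) - 1 with hXdef
        have hXg := hXgt k
        rw [← hXdef] at hXg
        set D := v a b (μs (m k)) - v a b (νs (m k)) with hDdef
        have habs := abs_le.mp h2
        have hεB : ε / B ≤ ε := by
          rw [div_le_iff₀ hBpos]; nlinarith
        rcases le_or_gt X 0 with hXle | hXpos
        · nlinarith [mul_nonneg (by linarith : (0:ℝ) ≤ D + ε) (by linarith : (0:ℝ) ≤ -X),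
            mul_nonneg (le_of_lt hε) (by linarith : (0:ℝ) ≤ X + 1)]
        · have hterm' := hterm (m k) a b
          rw [← hXdef] at hterm'
          have hXleB : X ≤ B := by
            have h3 : (V/2) * X ≤ v a b (νs (m k)) * X :=
              mul_le_mul_of_nonneg_right h1 hXpos.le
            have h4 : X ≤ 2 * C₁ / V := by
              rw [le_div_iff₀ (by positivity : (0:ℝ) < V)]
              nlinarith
            exact le_trans h4 (le_max_right _ _)
          have hs1 : D * X ≤ (ε/B) * X := mul_le_mul_of_nonneg_right habs.2 hXpos.le
          have hs2 : (ε/B) * X ≤ (ε/B) * B :=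
            mul_le_mul_of_nonneg_left hXleB (by positivity)
          have hs3 : (ε/B) * B = ε := div_mul_cancel₀ ε (ne_of_gt hBpos)
          exact le_trans hs1 (le_trans hs2 (le_of_eq hs3))
  -- conclusion
  obtain ⟨ε, hε, hεle⟩ : ∃ ε : ℝ, 0 < ε ∧ lam * ((d:ℝ) * ((d:ℝ) * ε)) ≤ δ / 4 := by
    refine ⟨δ / (4 * (lam * ((d:ℝ) * d) + 1)), by positivity, ?_⟩
    have hden : (0:ℝ) < 4 * (lam * ((d:ℝ) * d) + 1) := by positivity
    have heq : lam * ((d:ℝ) * ((d:ℝ) * (δ / (4 * (lam * ((d:ℝ) * d) + 1)))))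
        = (lam * ((d:ℝ) * (d:ℝ)) * δ) / (4 * (lam * ((d:ℝ) * d) + 1)) := by
      ring
    rw [heq, div_le_div_iff₀ hden (by norm_num : (0:ℝ) < 4)]
    nlinarith [hδ]
  have hall : ∀ᶠ k in atTop, ∀ a : Fin d, ∀ b : Fin d,
      (v a b (μs (m k)) - v a b (νs (m k))) * (exp (pn (m k) b - pn (m k) a) - 1) ≤ ε :=
    eventually_all.2 fun a => eventually_all.2 fun b => hpair a b ε hε
  have hh4 : ∀ᶠ k in atTop, |h (μs (m k)) - h (νs (m k))| ≤ δ / 4 := by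
    filter_upwards [Metric.tendsto_nhds.mp hhlim (δ/4) (by positivity)] with k hk
    rw [Real.dist_eq, sub_zero] at hk
    exact hk.le
  obtain ⟨k, hk1, hk2⟩ := (hall.and hh4).exists
  have hΔH : H (μs (m k)) (pn (m k)) - H (νs (m k)) (pn (m k))
      = ∑ a : Fin d, ∑ b : Fin d, (v a b (μs (m k)) - v a b (νs (m k)))
          * (exp (pn (m k) b - pn (m k) a) - 1) := by
    rw [hH, hH, ← Finset.sum_sub_distrib]
    refine Finset.sum_congr rfl fun a _ => ?_
    rw [← Finset.sum_sub_distrib]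
    refine Finset.sum_congr rfl fun b _ => ?_
    ring
  have hsumle : (∑ a : Fin d, ∑ b : Fin d, (v a b (μs (m k)) - v a b (νs (m k)))
      * (exp (pn (m k) b - pn (m k) a) - 1)) ≤ (d:ℝ) * ((d:ℝ) * ε) := by
    have hin : ∀ a : Fin d, (∑ b : Fin d, (v a b (μs (m k)) - v a b (νs (m k)))
        * (exp (pn (m k) b - pn (m k) a) - 1)) ≤ (d:ℝ) * ε := by
      intro a
      calc (∑ b : Fin d, (v a b (μs (m k)) - v a b (νs (m k)))
          * (exp (pn (m k) b - pn (m k) a) - 1)) ≤ ∑ _b : Fin d, ε :=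
            Finset.sum_le_sum fun b _ => hk1 a b
        _ = (d:ℝ) * ε := by
            rw [Finset.sum_const, Finset.card_univ, Fintype.card_fin, nsmul_eq_mul]
    calc (∑ a : Fin d, ∑ b : Fin d, (v a b (μs (m k)) - v a b (νs (m k)))
        * (exp (pn (m k) b - pn (m k) a) - 1)) ≤ ∑ _a : Fin d, (d:ℝ) * ε :=
          Finset.sum_le_sum fun a _ => hin a
      _ = (d:ℝ) * ((d:ℝ) * ε) := by
          rw [Finset.sum_const, Finset.card_univ, Fintype.card_fin, nsmul_eq_mul]
  have hfinal := hcomb (m k)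
  have hlamΔH : lam * (H (μs (m k)) (pn (m k)) - H (νs (m k)) (pn (m k))) ≤ δ / 4 := by
    have h1 : lam * (H (μs (m k)) (pn (m k)) - H (νs (m k)) (pn (m k)))
        ≤ lam * ((d:ℝ) * ((d:ℝ) * ε)) := by
      apply mul_le_mul_of_nonneg_left _ hlam.le
      rw [hΔH]
      exact hsumle
    linarith [hεle]
  have habs2 := (abs_le.mp hk2).2
  linarith [hfinal, hlamΔH, habs2, hδ]
end

section
/- Let E = [-1,1]^d, and for f ∈ C¹(E) define H_n f(x) = ∑_{i=1}^d { ((1−x_i)/2) r_{n,+}^i(x) [ e^{n(f(x + 2e_i/n) − f(x))} − 1 ] + ((1+x_i)/2) r_{n,-}^i(x) [ e^{n(f(x − 2e_i/n) − f(x))} − 1 ] } on the grid E_n, and Hf(x) = ∑_i { v₊^i(x)(e^{2∂_i f(x)} − 1) + v₋^i(x)(e^{−2∂_i f(x)} − 1) }. If sup_{x∈E_n} ∑_i |((1−x_i)/2) r_{n,+}^i(x) − v₊^i(x)| + |((1+x_i)/2) r_{n,-}^i(x) − v₋^i(x)| → 0, then for every f ∈ C¹(E), sup_{x ∈ E_n}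 |H_n f(x) − Hf(x)| → 0 as n → ∞. -/
open Real
open scoped BigOperators

private lemma aux_abs_exp_sub_one_le (t : ℝ) : |Real.exp t - 1| ≤ |t| * Real.exp |t| := by
  rcases le_or_gt 0 t with h | h
  · rw [abs_of_nonneg h, abs_of_nonneg (by linarith [Real.one_le_exp h] : (0:ℝ) ≤ Real.exp t - 1)]
    have h1 : (1 - t) * Real.exp t ≤ Real.exp (-t) * Real.exp t :=
      mul_le_mul_of_nonneg_right (by linarith [Real.add_one_le_exp (-t)]) (Real.exp_pos t).le
    rw [← Real.exp_add] at h1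
    simp only [neg_add_cancel, Real.exp_zero] at h1
    nlinarith
  · have hlt : Real.exp t < 1 := by
      have := Real.exp_lt_exp.2 h
      rwa [Real.exp_zero] at this
    rw [abs_of_neg h, abs_of_nonpos (by linarith : Real.exp t - 1 ≤ 0)]
    have h1 : 1 - Real.exp t ≤ -t := by linarith [Real.add_one_le_exp t]
    have h2 : (1:ℝ) ≤ Real.exp (-t) := Real.one_le_exp (by linarith)
    nlinarith

set_option maxHeartbeats 1000000

private lemma aux_exp_lip {a b c : ℝ} (hb : b ≤ c) (hd : |a - b| ≤ 2) :
    |Real.exp a - Real.exp b| ≤ Real.exp c * Real.exp 2 * |a - b| := by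
  have hab : b + (a - b) = a := by ring
  have he : Real.exp a - Real.exp b = Real.exp b * (Real.exp (a - b) - 1) := by
    rw [mul_sub, mul_one, ← Real.exp_add, hab]
  rw [he, abs_mul, abs_of_nonneg (Real.exp_pos b).le]
  calc Real.exp b * |Real.exp (a - b) - 1|
      ≤ Real.exp b * (|a - b| * Real.exp |a - b|) :=
        mul_le_mul_of_nonneg_left (aux_abs_exp_sub_one_le _) (Real.exp_pos b).le
    _ ≤ Real.exp c * (|a - b| * Real.exp 2) := by
        have h1 : Real.exp b ≤ Real.exp c := Real.exp_le_exp.2 hb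
        have h2 : Real.exp |a - b| ≤ Real.exp 2 := Real.exp_le_exp.2 hd
        have h3 : (0:ℝ) ≤ |a - b| := abs_nonneg _
        have h4 : |a - b| * Real.exp |a - b| ≤ |a - b| * Real.exp 2 :=
          mul_le_mul_of_nonneg_left h2 h3
        have h5 : Real.exp b * (|a - b| * Real.exp |a - b|) ≤
            Real.exp b * (|a - b| * Real.exp 2) :=
          mul_le_mul_of_nonneg_left h4 (Real.exp_pos b).le
        have h6 : Real.exp b * (|a - b| * Real.exp 2) ≤ Real.exp c * (|a - b| * Real.exp 2) :=
          mul_le_mul_of_nonneg_right h1 (by positivity)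
        linarith
    _ = Real.exp c * Real.exp 2 * |a - b| := by ring

/-- Convergence of the nonlinear generators for the d-dimensional Ehrenfest model:
if the rates satisfy the uniform convergence
`sup_{x ∈ E_n} ∑_i |((1−x_i)/2) r_{n,+}^i(x) − v₊^i(x)| + |((1+x_i)/2) r_{n,-}^i(x) − v₋^i(x)| → 0`,
then for every `f ∈ C¹(E)`, `sup_{x ∈ E_n} |H_n f(x) − Hf(x)| → 0`, where
`H_n f = (1/n) e^{-nf} A_n e^{nf}` and `Hf(x) = ∑_i v₊^i(x)(e^{2∂_i f} − 1) + v₋^i(x)(e^{−2∂_i f} − 1)`. -/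
theorem stmt_19 {d : ℕ}
    (En : ℕ → Set (Fin d → ℝ))
    (hEn : ∀ n, En n = {x : Fin d → ℝ |
      ∀ i, ∃ m : ℕ, m ≤ n ∧ x i = -1 + 2 * (m : ℝ) / n})
    (rp rm : ℕ → Fin d → (Fin d → ℝ) → ℝ)
    (hrp0 : ∀ n i, ∀ x ∈ En n, 0 ≤ rp n i x) (hrm0 : ∀ n i, ∀ x ∈ En n, 0 ≤ rm n i x)
    (vp vm : Fin d → (Fin d → ℝ) → ℝ)
    (hvpc : ∀ i, Continuous (vp i)) (hvmc : ∀ i, Continuous (vm i))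
    (hvp0 : ∀ i x, 0 ≤ vp i x) (hvm0 : ∀ i x, 0 ≤ vm i x)
    -- uniform convergence of the rates:
    (hconv : ∀ ε > (0:ℝ), ∃ N : ℕ, ∀ n ≥ N, ∀ x ∈ En n,
      (∑ i, (|(1 - x i) / 2 * rp n i x - vp i x| +
             |(1 + x i) / 2 * rm n i x - vm i x|)) < ε)
    (f : (Fin d → ℝ) → ℝ) (hf : ContDiff ℝ 1 f)
    (Hn : ℕ → (Fin d → ℝ) → ℝ)
    (hHn : ∀ n x, Hn n x = ∑ i,
      ((1 - x i) / 2 * rp n i x *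
        (exp ((n : ℝ) * (f (x + (2 / n : ℝ) • (Pi.single i 1 : Fin d → ℝ)) - f x)) - 1) +
       (1 + x i) / 2 * rm n i x *
        (exp ((n : ℝ) * (f (x - (2 / n : ℝ) • (Pi.single i 1 : Fin d → ℝ)) - f x)) - 1)))
    (Hf : (Fin d → ℝ) → ℝ)
    (hHf : ∀ x, Hf x = ∑ i,
      (vp i x * (exp (2 * fderiv ℝ f x (Pi.single i 1)) - 1) +
       vm i x * (exp (-(2 * fderiv ℝ f x (Pi.single i 1))) - 1))) :
    ∀ ε > (0:ℝ), ∃ N : ℕ, ∀ n ≥ N, ∀ x ∈ En n, |Hn n x - Hf x| < ε := by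
  intro ε hε
  have hdf : Differentiable ℝ f := hf.differentiable one_ne_zero
  have hcf : Continuous (fderiv ℝ f) := hf.continuous_fderiv one_ne_zero
  obtain ⟨M, hM⟩ := (isCompact_closedBall (0 : Fin d → ℝ) 3).exists_bound_of_continuousOn
    hcf.continuousOn
  set M' := max M 0 with hM'def
  have hM'0 : 0 ≤ M' := le_max_right _ _
  have hM' : ∀ y ∈ Metric.closedBall (0 : Fin d → ℝ) 3, ‖fderiv ℝ f y‖ ≤ M' :=
    fun y hy => (hM y hy).trans (le_max_left _ _)
  set c := 2 * M' + 2 with hcdef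
  have hc0 : 0 < c := by linarith
  set C₁ := c * Real.exp c with hC₁def
  have hC₁0 : 0 < C₁ := mul_pos hc0 (Real.exp_pos c)
  set K₂ := Real.exp c * Real.exp 2 with hK₂def
  have hK₂0 : 0 < K₂ := mul_pos (Real.exp_pos _) (Real.exp_pos _)
  have hgc : Continuous (fun x : Fin d → ℝ => ∑ i, (vp i x + vm i x)) := by
    apply continuous_finset_sum
    intro i _
    exact (hvpc i).add (hvmc i)
  obtain ⟨V, hV⟩ := (isCompact_closedBall (0 : Fin d → ℝ) 1).exists_bound_of_continuousOn
    hgc.continuousOn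
  set V' := max V 0 with hV'def
  have hV'0 : 0 ≤ V' := le_max_right _ _
  have hVbound : ∀ y ∈ Metric.closedBall (0 : Fin d → ℝ) 1, ∑ i, (vp i y + vm i y) ≤ V' := by
    intro y hy
    have h1 : ∑ i, (vp i y + vm i y) ≤ |∑ i, (vp i y + vm i y)| := le_abs_self _
    have h2 : |∑ i, (vp i y + vm i y)| ≤ V := by
      have := hV y hy
      rwa [Real.norm_eq_abs] at this
    exact le_trans (le_trans h1 h2) (le_max_left _ _)
  set ε' := min 1 (ε / (2 * (2 * K₂ * V' + 1))) with hε'def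
  have hε'0 : 0 < ε' := lt_min one_pos (by positivity)
  have hε'1 : ε' ≤ 1 := min_le_left _ _
  have hε'2 : ε' ≤ ε / (2 * (2 * K₂ * V' + 1)) := min_le_right _ _
  have hUC := (isCompact_closedBall (0 : Fin d → ℝ) 3).uniformContinuousOn_of_continuous
    hcf.continuousOn
  rw [Metric.uniformContinuousOn_iff] at hUC
  obtain ⟨δ, hδ0, hδ⟩ := hUC ε' hε'0
  set η := ε / (2 * (C₁ + 1)) with hηdef
  have hη0 : 0 < η := by positivity
  obtain ⟨N₂, hN₂⟩ := hconv η hη0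
  refine ⟨max (⌈2 / δ⌉₊ + 1) N₂, fun n hn x hx => ?_⟩
  have hn1 : 1 ≤ n := le_trans (le_trans (Nat.le_add_left 1 _) (le_max_left _ _)) hn
  have hnR : (0:ℝ) < n := by exact_mod_cast hn1
  have hnR1 : (1:ℝ) ≤ n := by exact_mod_cast hn1
  have hδn : 2 / (n : ℝ) < δ := by
    have h1 : (2 / δ) < ((⌈2 / δ⌉₊ + 1 : ℕ) : ℝ) := by
      push_cast
      exact lt_of_le_of_lt (Nat.le_ceil _) (by linarith)
    have h2 : ((⌈2 / δ⌉₊ + 1 : ℕ) : ℝ) ≤ n := by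
      exact_mod_cast le_trans (le_max_left _ _) hn
    have h3 : 2 / δ < (n : ℝ) := lt_of_lt_of_le h1 h2
    rw [div_lt_iff₀ hnR]
    calc (2:ℝ) = (2 / δ) * δ := by field_simp
      _ < (n : ℝ) * δ := mul_lt_mul_of_pos_right h3 hδ0
      _ = δ * n := by ring
  have hxmem : x ∈ {y : Fin d → ℝ | ∀ i, ∃ m : ℕ, m ≤ n ∧ y i = -1 + 2 * (m : ℝ) / n} := by
    rw [← hEn n]; exact hx
  have hx1 : ∀ i, |x i| ≤ 1 := by
    intro i
    obtain ⟨m, hm, hxi⟩ := hxmem i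
    have h0 : (0:ℝ) ≤ 2 * m / n := by positivity
    have h2 : 2 * (m:ℝ) / n ≤ 2 := by
      rw [div_le_iff₀ hnR]
      have : (m:ℝ) ≤ n := by exact_mod_cast hm
      linarith
    rw [hxi, abs_le]
    constructor <;> linarith
  have hxB1 : x ∈ Metric.closedBall (0 : Fin d → ℝ) 1 := by
    rw [Metric.mem_closedBall, dist_zero_right, pi_norm_le_iff_of_nonneg zero_le_one]
    intro i
    rw [Real.norm_eq_abs]
    exact hx1 i
  have hxB3 : x ∈ Metric.closedBall (0 : Fin d → ℝ) 3 :=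
    Metric.closedBall_subset_closedBall (by norm_num) hxB1
  have h2n0 : (0:ℝ) ≤ 2 / n := by positivity
  have h2n2 : 2 / (n:ℝ) ≤ 2 := by
    rw [div_le_iff₀ hnR]
    nlinarith
  -- the closed ball of radius 2/n around x
  have hsball : Metric.closedBall x (2 / (n:ℝ)) ⊆ Metric.closedBall (0 : Fin d → ℝ) 3 := by
    apply Metric.closedBall_subset_closedBall'
    rw [dist_zero_right]
    have hx1' : ‖x‖ ≤ 1 := by rwa [Metric.mem_closedBall, dist_zero_right] at hxB1
    linarith
  have hbound : ∀ z ∈ Metric.closedBall x (2 / (n:ℝ)), ‖fderiv ℝ f z - fderiv ℝ f x‖ ≤ ε' := by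
    intro z hz
    have hzd : dist z x < δ := lt_of_le_of_lt (by rwa [Metric.mem_closedBall] at hz) hδn
    have h1 := hδ z (hsball hz) x hxB3 hzd
    rw [dist_eq_norm] at h1
    exact h1.le
  have hderiv : ∀ z ∈ Metric.closedBall x (2 / (n:ℝ)),
      HasFDerivWithinAt f (fderiv ℝ f z) (Metric.closedBall x (2 / (n:ℝ))) z :=
    fun z _ => (hdf z).hasFDerivAt.hasFDerivWithinAt
  have hxs : x ∈ Metric.closedBall x (2 / (n:ℝ)) := Metric.mem_closedBall_self h2n0
  -- per-index estimate
  have key : ∀ i : Fin d,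
      |((1 - x i) / 2 * rp n i x *
        (exp ((n : ℝ) * (f (x + (2 / n : ℝ) • (Pi.single i 1 : Fin d → ℝ)) - f x)) - 1) +
       (1 + x i) / 2 * rm n i x *
        (exp ((n : ℝ) * (f (x - (2 / n : ℝ) • (Pi.single i 1 : Fin d → ℝ)) - f x)) - 1) -
       (vp i x * (exp (2 * fderiv ℝ f x (Pi.single i 1)) - 1) +
        vm i x * (exp (-(2 * fderiv ℝ f x (Pi.single i 1))) - 1)))|
      ≤ (|(1 - x i) / 2 * rp n i x - vp i x| + |(1 + x i) / 2 * rm n i x - vm i x|) * C₁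
        + (vp i x + vm i x) * (K₂ * (2 * ε')) := by
    intro i
    set b := fderiv ℝ f x (Pi.single i 1) with hbdef
    have hbM : |b| ≤ M' := by
      have h1 := (fderiv ℝ f x).le_opNorm (Pi.single i (1:ℝ))
      rw [Pi.norm_single, norm_one, mul_one, Real.norm_eq_abs] at h1
      exact le_trans h1 (hM' x hxB3)
    -- plus direction
    set yp := x + (2 / (n:ℝ)) • (Pi.single i 1 : Fin d → ℝ) with hypdef
    have hypsub : yp - x = (2 / (n:ℝ)) • (Pi.single i 1 : Fin d → ℝ) := by
      rw [hypdef]; abel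
    have hypnorm : ‖yp - x‖ = 2 / (n:ℝ) := by
      rw [hypsub, norm_smul, Pi.norm_single, norm_one, mul_one, Real.norm_eq_abs,
        abs_of_nonneg h2n0]
    have hyps : yp ∈ Metric.closedBall x (2 / (n:ℝ)) := by
      rw [Metric.mem_closedBall, dist_eq_norm, hypnorm]
    have hkey1 := Convex.norm_image_sub_le_of_norm_hasFDerivWithin_le' hderiv hbound
      (convex_closedBall x (2 / (n:ℝ))) hxs hyps
    rw [hypnorm, hypsub, map_smul] at hkey1
    rw [Real.norm_eq_abs] at hkey1
    have hplus : |(n:ℝ) * (f yp - f x) - 2 * b| ≤ 2 * ε' := by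
      have h1 : (n:ℝ) * (f yp - f x) - 2 * b = (n:ℝ) * (f yp - f x - (2 / (n:ℝ)) • b) := by
        rw [smul_eq_mul]; field_simp
      rw [h1, abs_mul, abs_of_nonneg hnR.le]
      calc (n:ℝ) * |f yp - f x - (2 / (n:ℝ)) • b| ≤ (n:ℝ) * (ε' * (2 / (n:ℝ))) := by
            exact mul_le_mul_of_nonneg_left hkey1 hnR.le
        _ = 2 * ε' := by field_simp
    -- minus direction
    set ym := x - (2 / (n:ℝ)) • (Pi.single i 1 : Fin d → ℝ) with hymdef
    have hymsub : ym - x = -((2 / (n:ℝ)) • (Pi.single i 1 : Fin d → ℝ)) := by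
      rw [hymdef]; abel
    have hymnorm : ‖ym - x‖ = 2 / (n:ℝ) := by
      rw [hymsub, norm_neg, norm_smul, Pi.norm_single, norm_one, mul_one, Real.norm_eq_abs,
        abs_of_nonneg h2n0]
    have hyms : ym ∈ Metric.closedBall x (2 / (n:ℝ)) := by
      rw [Metric.mem_closedBall, dist_eq_norm, hymnorm]
    have hkey2 := Convex.norm_image_sub_le_of_norm_hasFDerivWithin_le' hderiv hbound
      (convex_closedBall x (2 / (n:ℝ))) hxs hyms
    rw [hymnorm, hymsub, map_neg, map_smul] at hkey2
    rw [Real.norm_eq_abs] at hkey2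
    have hminus : |(n:ℝ) * (f ym - f x) - (-(2 * b))| ≤ 2 * ε' := by
      have h1 : (n:ℝ) * (f ym - f x) - (-(2 * b)) =
          (n:ℝ) * (f ym - f x - -((2 / (n:ℝ)) • b)) := by
        rw [smul_eq_mul]; field_simp
      rw [h1, abs_mul, abs_of_nonneg hnR.le]
      calc (n:ℝ) * |f ym - f x - -((2 / (n:ℝ)) • b)| ≤ (n:ℝ) * (ε' * (2 / (n:ℝ))) := by
            exact mul_le_mul_of_nonneg_left hkey2 hnR.le
        _ = 2 * ε' := by field_simp
    -- exponent bounds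
    set A := (n:ℝ) * (f yp - f x) with hAdef
    set B := (n:ℝ) * (f ym - f x) with hBdef
    have hAb : |A - 2 * b| ≤ 2 * ε' := hplus
    have hBb : |B - (-(2 * b))| ≤ 2 * ε' := hminus
    have h2b : |2 * b| ≤ 2 * M' := by
      rw [abs_mul, abs_two]
      linarith
    have hAc : |A| ≤ c := by
      have h1 : |A| ≤ |A - 2 * b| + |2 * b| := by
        calc |A| = |(A - 2 * b) + 2 * b| := by ring_nf
          _ ≤ |A - 2 * b| + |2 * b| := abs_add_le _ _
      have h2 : 2 * ε' ≤ 2 := by linarith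
      rw [hcdef]; linarith
    have hBc : |B| ≤ c := by
      have h1 : |B| ≤ |B - (-(2 * b))| + |(-(2 * b))| := by
        calc |B| = |(B - (-(2 * b))) + (-(2 * b))| := by ring_nf
          _ ≤ _ := abs_add_le _ _
      rw [abs_neg] at h1
      have h2 : 2 * ε' ≤ 2 := by linarith
      rw [hcdef]; linarith
    have hexpA1 : |exp A - 1| ≤ C₁ := by
      calc |exp A - 1| ≤ |A| * Real.exp |A| := aux_abs_exp_sub_one_le A
        _ ≤ c * Real.exp c := by
            have := Real.exp_le_exp.2 hAc
            nlinarith [abs_nonneg A, Real.exp_pos |A|]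
    have hexpB1 : |exp B - 1| ≤ C₁ := by
      calc |exp B - 1| ≤ |B| * Real.exp |B| := aux_abs_exp_sub_one_le B
        _ ≤ c * Real.exp c := by
            have := Real.exp_le_exp.2 hBc
            nlinarith [abs_nonneg B, Real.exp_pos |B|]
    have hexpA2 : |exp A - exp (2 * b)| ≤ K₂ * (2 * ε') := by
      have h1 : 2 * b ≤ c := by
        have := le_abs_self (2 * b)
        rw [hcdef]; linarith
      have h2 : |A - 2 * b| ≤ 2 := by linarith
      have h3 := aux_exp_lip h1 h2
      calc |exp A - exp (2 * b)| ≤ Real.exp c * Real.exp 2 * |A - 2 * b| := h3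
        _ ≤ K₂ * (2 * ε') := by
            rw [hK₂def]
            exact mul_le_mul_of_nonneg_left hAb (by positivity)
    have hexpB2 : |exp B - exp (-(2 * b))| ≤ K₂ * (2 * ε') := by
      have h1 : -(2 * b) ≤ c := by
        have := neg_le_abs (2 * b)
        rw [hcdef]; linarith
      have h2 : |B - (-(2 * b))| ≤ 2 := by linarith
      have h3 := aux_exp_lip h1 h2
      calc |exp B - exp (-(2 * b))| ≤ Real.exp c * Real.exp 2 * |B - (-(2 * b))| := h3
        _ ≤ K₂ * (2 * ε') := by
            rw [hK₂def]
            exact mul_le_mul_of_nonneg_left hBb (by positivity)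
    -- algebraic split
    set a1 := (1 - x i) / 2 * rp n i x with ha1def
    set a2 := (1 + x i) / 2 * rm n i x with ha2def
    have hsplit : a1 * (exp A - 1) + a2 * (exp B - 1) -
        (vp i x * (exp (2 * b) - 1) + vm i x * (exp (-(2 * b)) - 1)) =
        (a1 - vp i x) * (exp A - 1) + vp i x * (exp A - exp (2 * b)) +
        ((a2 - vm i x) * (exp B - 1) + vm i x * (exp B - exp (-(2 * b)))) := by ring
    rw [hsplit]
    have habs1 : |(a1 - vp i x) * (exp A - 1) + vp i x * (exp A - exp (2 * b))| ≤
        |a1 - vp i x| * |exp A - 1| + vp i x * |exp A - exp (2 * b)| := by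
      refine le_trans (abs_add_le _ _) ?_
      rw [abs_mul, abs_mul, abs_of_nonneg (hvp0 i x)]
    have habs2 : |(a2 - vm i x) * (exp B - 1) + vm i x * (exp B - exp (-(2 * b)))| ≤
        |a2 - vm i x| * |exp B - 1| + vm i x * |exp B - exp (-(2 * b))| := by
      refine le_trans (abs_add_le _ _) ?_
      rw [abs_mul, abs_mul, abs_of_nonneg (hvm0 i x)]
    have habs : |(a1 - vp i x) * (exp A - 1) + vp i x * (exp A - exp (2 * b)) +
        ((a2 - vm i x) * (exp B - 1) + vm i x * (exp B - exp (-(2 * b))))| ≤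
        |a1 - vp i x| * |exp A - 1| + vp i x * |exp A - exp (2 * b)| +
        (|a2 - vm i x| * |exp B - 1| + vm i x * |exp B - exp (-(2 * b))|) :=
      le_trans (abs_add_le _ _) (add_le_add habs1 habs2)
    refine le_trans habs ?_
    have t1 : |a1 - vp i x| * |exp A - 1| ≤ |a1 - vp i x| * C₁ :=
      mul_le_mul_of_nonneg_left hexpA1 (abs_nonneg _)
    have t2 : vp i x * |exp A - exp (2 * b)| ≤ vp i x * (K₂ * (2 * ε')) :=
      mul_le_mul_of_nonneg_left hexpA2 (hvp0 i x)
    have t3 : |a2 - vm i x| * |exp B - 1| ≤ |a2 - vm i x| * C₁ :=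
      mul_le_mul_of_nonneg_left hexpB1 (abs_nonneg _)
    have t4 : vm i x * |exp B - exp (-(2 * b))| ≤ vm i x * (K₂ * (2 * ε')) :=
      mul_le_mul_of_nonneg_left hexpB2 (hvm0 i x)
    have : (|a1 - vp i x| + |a2 - vm i x|) * C₁ + (vp i x + vm i x) * (K₂ * (2 * ε')) =
        |a1 - vp i x| * C₁ + vp i x * (K₂ * (2 * ε')) +
        (|a2 - vm i x| * C₁ + vm i x * (K₂ * (2 * ε'))) := by ring
    rw [this]
    linarith
  -- combine
  rw [hHn, hHf, ← Finset.sum_sub_distrib]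
  have hS := hN₂ n (le_trans (le_max_right _ _) hn) x hx
  have hG := hVbound x hxB1
  have hGnn : (0:ℝ) ≤ ∑ i, (vp i x + vm i x) :=
    Finset.sum_nonneg fun i _ => add_nonneg (hvp0 i x) (hvm0 i x)
  have hSnn : (0:ℝ) ≤ ∑ i, (|(1 - x i) / 2 * rp n i x - vp i x| +
      |(1 + x i) / 2 * rm n i x - vm i x|) :=
    Finset.sum_nonneg fun i _ => add_nonneg (abs_nonneg _) (abs_nonneg _)
  calc |∑ i, _| ≤ ∑ i, |_| := Finset.abs_sum_le_sum_abs _ _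
    _ ≤ ∑ i, ((|(1 - x i) / 2 * rp n i x - vp i x| + |(1 + x i) / 2 * rm n i x - vm i x|) * C₁
        + (vp i x + vm i x) * (K₂ * (2 * ε'))) := Finset.sum_le_sum fun i _ => key i
    _ = (∑ i, (|(1 - x i) / 2 * rp n i x - vp i x| + |(1 + x i) / 2 * rm n i x - vm i x|)) * C₁
        + (∑ i, (vp i x + vm i x)) * (K₂ * (2 * ε')) := by
        rw [Finset.sum_add_distrib, ← Finset.sum_mul, ← Finset.sum_mul]
    _ < ε := by
        have u1 : (∑ i, (|(1 - x i) / 2 * rp n i x - vp i x| +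
            |(1 + x i) / 2 * rm n i x - vm i x|)) * C₁ < η * C₁ :=
          mul_lt_mul_of_pos_right hS hC₁0
        have u2 : η * C₁ < ε / 2 := by
          have h1 : η * (C₁ + 1) = ε / 2 := by
            rw [hηdef]; field_simp
          nlinarith
        have u3 : (∑ i, (vp i x + vm i x)) * (K₂ * (2 * ε')) ≤ V' * (K₂ * (2 * ε')) :=
          mul_le_mul_of_nonneg_right hG (by positivity)
        have u4 : V' * (K₂ * (2 * ε')) ≤ ε / 2 := by
          have h1 : V' * (K₂ * (2 * ε')) = (2 * K₂ * V') * ε' := by ring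
          rw [h1]
          have h2 : (2 * K₂ * V') * ε' ≤ (2 * K₂ * V') * (ε / (2 * (2 * K₂ * V' + 1))) :=
            mul_le_mul_of_nonneg_left hε'2 (by positivity)
          have h3 : (2 * K₂ * V') * (ε / (2 * (2 * K₂ * V' + 1))) ≤ ε / 2 := by
            have heq : (2 * K₂ * V') * (ε / (2 * (2 * K₂ * V' + 1))) =
                ε * (2 * K₂ * V') / (2 * (2 * K₂ * V' + 1)) := by ring
            rw [heq, div_le_div_iff₀ (by positivity) (by norm_num : (0:ℝ) < 2)]
            nlinarith [mul_nonneg (mul_nonneg hK₂0.le hV'0) hε.le]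
          linarith
        linarith
end
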